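/- arXiv:2211.11102 — 8 statements merged into one kernel-verified Lean document; each statement's English description precedes it below -/
import Mathlib

section
/- Let (G_{ij}, p_{ij}, h_{ij}) be a direct sequence of towers of groups in which every G_{ij} is a finitely generated abelian group, and set Γ_j = lim_i G_{ij}. Suppose that for every j and every γ ∈ Γ_j there exists k ≥ j such that the composite homomorphism Γ_j → Γ_k sends γ to 0 (i.e., colim_j Γ_j = 0). Then for each j there exists k > j such that the composite homomorphism Γ_j → Γ_k is trivial (the zero homomorphism). -/
open Topology Filter



/-- The composite homomorphism `G_{i,j} → G_{i,j+k}` of the horizontal maps of a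
direct sequence of towers of abelian groups (the identity when `k = 0`). -/
def hIter (G : ℕ → ℕ → Type*) [∀ i j, AddCommGroup (G i j)]
    (h : ∀ i j, G i j →+ G i (j + 1)) (i j : ℕ) : ∀ k, G i j →+ G i (j + k)
  | 0 => AddMonoidHom.id _
  | k + 1 => (h i (j + k)).comp (hIter G h i j k)

section Aux

variable (G : ℕ → ℕ → Type*) [∀ i j, AddCommGroup (G i j)]

theorem hIter_mono (h : ∀ i j, G i j →+ G i (j + 1)) (i j : ℕ) {k K : ℕ} (hkK : k ≤ K)
    {x : G i j} (hx : hIter G h i j k x = 0) : hIter G h i j K x = 0 := by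
  obtain ⟨d, rfl⟩ := Nat.exists_eq_add_of_le hkK
  clear hkK
  induction d with
  | zero => exact hx
  | succ d ih =>
    show (h i (j + (k + d))) (hIter G h i j (k + d) x) = 0
    rw [ih, map_zero]

/-- The subgroup of threads of the `j`-th tower. -/
def threads (p : ∀ i j, G (i + 1) j →+ G i j) (j : ℕ) : AddSubgroup (∀ i, G i j) where
  carrier := {g | ∀ i, p i j (g (i + 1)) = g i}
  add_mem' := fun {a b} ha hb i => by simp [ha i, hb i]
  zero_mem' := fun i => by simp
  neg_mem' := fun {a} ha i => by simp [ha i]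

/-- The subgroup of those `g` that die at stage `k`. -/
def death (h : ∀ i j, G i j →+ G i (j + 1)) (j k : ℕ) : AddSubgroup (∀ i, G i j) where
  carrier := {g | ∀ i, hIter G h i j k (g i) = 0}
  add_mem' := fun {a b} ha hb i => by simp [ha i, hb i]
  zero_mem' := fun i => by simp
  neg_mem' := fun {a} ha i => by simp [ha i]

theorem mem_threads {p : ∀ i j, G (i + 1) j →+ G i j} {j : ℕ} {g : ∀ i, G i j} :
    g ∈ threads G p j ↔ ∀ i, p i j (g (i + 1)) = g i := Iff.rfl

theorem mem_death {h : ∀ i j, G i j →+ G i (j + 1)} {j k : ℕ} {g : ∀ i, G i j} :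
    g ∈ death G h j k ↔ ∀ i, hIter G h i j k (g i) = 0 := Iff.rfl

theorem death_mono (h : ∀ i j, G i j →+ G i (j + 1)) (j : ℕ) {k K : ℕ} (hkK : k ≤ K) :
    death G h j k ≤ death G h j K :=
  fun _g hg i => hIter_mono G h i j hkK (hg i)

end Aux

/-- Theorem A(a): for a direct sequence of towers of finitely generated abelian groups,
if the colimit of the inverse limits `Γ_j = lim_i G_{ij}` is trivial, then for each `j`
there is `k > j` such that the composite homomorphism `Γ_j → Γ_k` is trivial.
(Threads of the `j`-th tower are functions `g : ∀ i, G i j` with `p i j (g (i+1)) = g i`;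
the induced maps on inverse limits are applied coordinatewise.) -/
theorem stmt_1 (G : ℕ → ℕ → Type*) [∀ i j, AddCommGroup (G i j)]
    [∀ i j, AddGroup.FG (G i j)]
    (p : ∀ i j, G (i + 1) j →+ G i j) (h : ∀ i j, G i j →+ G i (j + 1))
    (hcomm : ∀ i j (g : G (i + 1) j), h i j (p i j g) = p i (j + 1) (h (i + 1) j g))
    (htriv : ∀ j (g : ∀ i, G i j), (∀ i, p i j (g (i + 1)) = g i) →
      ∃ k, ∀ i, hIter G h i j k (g i) = 0) :
    ∀ j, ∃ k, 0 < k ∧ ∀ g : ∀ i, G i j, (∀ i, p i j (g (i + 1)) = g i) →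
      ∀ i, hIter G h i j k (g i) = 0 := by
  classical
  intro j
  -- countability of each group
  haveI hfin : ∀ i' j', Module.Finite ℤ (G i' j') :=
    fun i' j' => Module.Finite.iff_addGroup_fg.mpr inferInstance
  haveI hcnt : ∀ i' j', Countable (G i' j') := by
    intro i' j'
    obtain ⟨n, f, hf⟩ := Module.Finite.exists_fin' ℤ (G i' j')
    exact hf.countable
  -- discrete topology on each group
  letI tops : ∀ i' j', TopologicalSpace (G i' j') := fun _ _ => ⊥
  haveI hdisc : ∀ i' j', DiscreteTopology (G i' j') := fun _ _ => ⟨rfl⟩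
  set S : AddSubgroup (∀ i, G i j) := threads G p j with hSdef
  -- S is closed
  have hSclosed : IsClosed (S : Set (∀ i, G i j)) := by
    have : (S : Set (∀ i, G i j)) = ⋂ i, {g | p i j (g (i + 1)) = g i} := by
      ext g; simp [hSdef, mem_threads, Set.mem_iInter]
    rw [this]
    exact isClosed_iInter fun i => isClosed_eq
      (continuous_of_discreteTopology.comp (continuous_apply (i + 1))) (continuous_apply i)
  have hEclosed : ∀ k, IsClosed ((death G h j k : AddSubgroup (∀ i, G i j)) :
      Set (∀ i, G i j)) := by
    intro k
    have : ((death G h j k : AddSubgroup (∀ i, G i j)) : Set (∀ i, G i j)) =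
        ⋂ i, {g | hIter G h i j k (g i) = 0} := by
      ext g; simp [mem_death, Set.mem_iInter]
    rw [this]
    exact isClosed_iInter fun i => isClosed_eq
      (continuous_of_discreteTopology.comp (continuous_apply i)) continuous_const
  -- Baire category on the Polish space S
  haveI : PolishSpace (S : Set (∀ i, G i j)) := hSclosed.polishSpace
  letI := TopologicalSpace.upgradeIsCompletelyMetrizable (S : Set (∀ i, G i j))
  have hbaire : ∃ k0, (interior (Subtype.val ⁻¹' ((death G h j k0 : AddSubgroup (∀ i, G i j)) :
      Set (∀ i, G i j)) : Set (S : Set (∀ i, G i j)))).Nonempty := by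
    refine nonempty_interior_of_iUnion_of_closed
      (fun k => (hEclosed k).preimage continuous_subtype_val) ?_
    ext ⟨g, hg⟩
    simp only [Set.mem_iUnion, Set.mem_preimage, Set.mem_univ, iff_true]
    obtain ⟨k, hk⟩ := htriv j g hg
    exact ⟨k, hk⟩
  obtain ⟨k0, x, hx⟩ := hbaire
  -- there is N such that every thread vanishing below N dies at stage k0
  have hcyl : ∃ N, ∀ z ∈ S, (∀ i ≤ N, z i = 0) → z ∈ death G h j k0 := by
    have hxA : (x : ∀ i, G i j) ∈ death G h j k0 := Set.mem_preimage.mp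
      (Set.mem_of_mem_of_subset hx interior_subset)
    have hnhds : (Subtype.val ⁻¹' ((death G h j k0 : AddSubgroup (∀ i, G i j)) :
        Set (∀ i, G i j)) : Set (S : Set (∀ i, G i j))) ∈ 𝓝 x :=
      mem_interior_iff_mem_nhds.mp hx
    rw [nhds_subtype] at hnhds
    obtain ⟨U, hU, hUsub⟩ := hnhds
    rw [nhds_pi, Filter.mem_pi] at hU
    obtain ⟨I, Ifin, t, ht, hIt⟩ := hU
    obtain ⟨N, hNb⟩ := Ifin.bddAbove
    refine ⟨N, fun z hz hz0 => ?_⟩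
    have hw : (x : ∀ i, G i j) + z ∈ S := S.add_mem x.2 hz
    have hwU : ((x : ∀ i, G i j) + z) ∈ U := by
      apply hIt
      intro i hi
      have h0 : z i = 0 := hz0 i (hNb hi)
      have : ((x : ∀ i, G i j) + z) i = (x : ∀ i, G i j) i := by simp [h0]
      rw [this]
      exact mem_of_mem_nhds (ht i)
    have hmem : ((x : ∀ i, G i j) + z) ∈ death G h j k0 :=
      hUsub (Set.mem_preimage.mpr hwU : (⟨(x : ∀ i, G i j) + z, hw⟩ : (S : Set (∀ i, G i j))) ∈ _)
    have := (death G h j k0).sub_mem hmem hxA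
    simpa using this
  obtain ⟨N, hN⟩ := hcyl
  -- a thread vanishing at coordinate N vanishes at all coordinates ≤ N
  have hdown : ∀ z ∈ S, z N = 0 → ∀ i ≤ N, z i = 0 := by
    intro z hz hzN
    have key : ∀ m i, z (i + m) = 0 → z i = 0 := by
      intro m
      induction m with
      | zero => exact fun i h0 => h0
      | succ m ih =>
        intro i h0
        have h1 : z ((i + 1) + m) = 0 := by
          rw [show (i + 1) + m = i + (m + 1) from by omega]; exact h0
        have h2 : z (i + 1) = 0 := ih (i + 1) h1
        rw [← hz i, h2, map_zero]
    intro i hi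
    have hNi := key (N - i) i
    rw [show i + (N - i) = N from by omega] at hNi
    exact hNi hzN
  have hker : ∀ z ∈ S, z N = 0 → z ∈ death G h j k0 := fun z hz h0 =>
    hN z hz (hdown z hz h0)
  -- the image of S at coordinate N is a finitely generated abelian group
  set R : AddSubgroup (G N j) := S.map (Pi.evalAddMonoidHom (fun i => G i j) N) with hRdef
  obtain ⟨T, hT⟩ := IsNoetherian.noetherian (AddSubgroup.toIntSubmodule R)
  have hRM : ∀ y : G N j, y ∈ AddSubgroup.toIntSubmodule R ↔ y ∈ R := fun y => by
    rw [← SetLike.mem_coe, AddSubgroup.coe_toIntSubmodule, SetLike.mem_coe]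
  have hTR : ∀ y ∈ T, y ∈ R := fun y hy =>
    (hRM y).mp (hT ▸ Submodule.subset_span hy)
  have hlift : ∀ y ∈ R, ∃ s k, s ∈ S ∧ s N = y ∧ s ∈ death G h j k := by
    intro y hy
    obtain ⟨s, hs, hsN⟩ := AddSubgroup.mem_map.mp hy
    obtain ⟨k, hk⟩ := htriv j s hs
    exact ⟨s, k, hs, hsN, hk⟩
  choose sf kf hsf1 hsf2 hsf3 using hlift
  set K1 : ℕ := T.attach.sup fun y => kf y.1 (hTR y.1 y.2) with hK1
  set K : ℕ := max (max k0 K1) 1 with hK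
  have hk0K : k0 ≤ K := le_trans (le_max_left _ _) (le_max_left _ _)
  have hK1K : K1 ≤ K := le_trans (le_max_right _ _) (le_max_left _ _)
  have hfinal : ∀ g ∈ S, g ∈ death G h j K := by
    intro g hg
    have hyR : g N ∈ R := ⟨g, hg, rfl⟩
    have hyM : g N ∈ Submodule.span ℤ (T : Set (G N j)) := by
      rw [hT]; exact (hRM _).mpr hyR
    obtain ⟨c, -, hc⟩ := Submodule.mem_span_finset.mp hyM
    set g' : ∀ i, G i j := ∑ y ∈ T.attach, c y.1 • sf y.1 (hTR y.1 y.2) with hg'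
    have hg'S : g' ∈ S :=
      AddSubgroup.sum_mem _ fun y _ => AddSubgroup.zsmul_mem _ (hsf1 _ _) _
    have hg'E : g' ∈ death G h j K := by
      refine AddSubgroup.sum_mem _ fun y _ => AddSubgroup.zsmul_mem _ ?_ _
      refine death_mono G h j (le_trans ?_ hK1K) (hsf3 y.1 (hTR y.1 y.2))
      exact Finset.le_sup (f := fun y => kf y.1 (hTR y.1 y.2)) (Finset.mem_attach _ y)
    have hg'N : g' N = g N := by
      rw [hg', ← hc, Finset.sum_apply]
      rw [← Finset.sum_attach T fun y => c y • y]
      exact Finset.sum_congr rfl fun y _ => by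
        rw [Pi.smul_apply, hsf2 y.1 (hTR y.1 y.2)]
    have hsub : g - g' ∈ death G h j k0 := by
      refine hker _ (S.sub_mem hg hg'S) ?_
      simp [hg'N]
    have hfin2 : g' + (g - g') ∈ death G h j K :=
      (death G h j K).add_mem hg'E (death_mono G h j hk0K hsub)
    simpa using hfin2
  exact ⟨K, lt_of_lt_of_le one_pos (le_max_right _ _), fun g hg i => hfinal g hg i⟩
end

section
/- Let (G_{ij}, p_{ij}, h_{ij}) be a direct sequence of towers of groups in which every G_{ij} is a countable abelian group. For each j let Γ_j = lim¹_i G_{ij}, the cokernel of the homomorphism d_j : ∏_i G_{ij} → ∏_i G_{ij} defined by d_j(g)_i = g_i − p_{ij}(g_{i+1}); the horizontal maps induce homomorphisms Γ_j → Γ_{j+1}, and composites Γ_j → Γ_k for j ≤ k. Suppose that for every j and every γ ∈ Γ_j there exists k ≥ j such that the composite homomorphism Γ_j → Γ_k sends γ to 0 (i.e., colim_j Γ_j = 0). Then for each j there exists k > j such that the composite homomorphism Γ_j → Γ_k is the zero homomorphism. -/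
namespace Stmt3Aux

variable (G : ℕ → ℕ → Type*) [∀ i j, AddCommGroup (G i j)]
variable (p : ∀ i j, G (i + 1) j →+ G i j) (h : ∀ i j, G i j →+ G i (j + 1))

/-- `a` maps to a `d`-boundary with witness `c`. -/
def Rel (j k : ℕ) (a : ∀ i, G i j) (c : ∀ i, G i (j + k)) : Prop :=
  ∀ i, hIter G h i j k (a i) = c i - p i (j + k) (c (i + 1))

lemma Rel.add {j k : ℕ} {a a' : ∀ i, G i j} {c c' : ∀ i, G i (j + k)}
    (h1 : Rel G p h j k a c) (h2 : Rel G p h j k a' c') :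
    Rel G p h j k (fun i => a i + a' i) (fun i => c i + c' i) := by
  intro i; rw [map_add, h1 i, h2 i, map_add]; exact sub_add_sub_comm _ _ _ _

lemma Rel.sub {j k : ℕ} {a a' : ∀ i, G i j} {c c' : ∀ i, G i (j + k)}
    (h1 : Rel G p h j k a c) (h2 : Rel G p h j k a' c') :
    Rel G p h j k (fun i => a i - a' i) (fun i => c i - c' i) := by
  intro i; rw [map_sub, h1 i, h2 i, map_sub]; exact sub_sub_sub_comm _ _ _ _

/-- Families supported on an initial segment are boundaries. -/
lemma exists_boundary (j N : ℕ) (f : ∀ i, G i j) (hf : ∀ i, N ≤ i → f i = 0) :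
    ∃ c : ∀ i, G i j, ∀ i, f i = c i - p i j (c (i + 1)) := by
  let c' : ℕ → ∀ i, G i j := fun d =>
    Nat.rec (motive := fun _ => ∀ i, G i j) (fun _ => 0)
      (fun _ ih i => f i + p i j (ih (i + 1))) d
  have hc0 : ∀ i, c' 0 i = 0 := fun _ => rfl
  have hcs : ∀ d i, c' (d + 1) i = f i + p i j (c' d (i + 1)) := fun _ _ => rfl
  refine ⟨fun i => c' (N - i) i, ?_⟩
  intro i
  show f i = c' (N - i) i - p i j (c' (N - (i + 1)) (i + 1))
  by_cases hi : N ≤ i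
  · have h1 : N - i = 0 := Nat.sub_eq_zero_of_le hi
    have h2 : N - (i + 1) = 0 := Nat.sub_eq_zero_of_le (hi.trans (Nat.le_succ i))
    rw [hf i hi, h1, h2, hc0, hc0, map_zero, sub_zero]
  · have h1 : N - i = (N - (i + 1)) + 1 := by omega
    rw [h1, hcs, add_sub_cancel_right]

/-- The image subgroup at stage `(k, m)` is dense around `0` at precision `n`. -/
def Dns (j k m n : ℕ) : Prop :=
  ∀ n', n ≤ n' → ∀ τ : ∀ i, G i j, (∀ i < n, τ i = 0) →
    ∃ (a : ∀ i, G i j) (c : ∀ i, G i (j + k)), Rel G p h j k a c ∧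
      (∀ i < m, a i = 0) ∧ (∀ i < m, c i = 0) ∧ ∀ i < n', a i = τ i

/-- The image subgroup at stage `(k, m)` is somewhere dense. -/
def SDs (j k m : ℕ) : Prop :=
  ∃ (n : ℕ) (σ : ∀ i, G i j), ∀ n', n ≤ n' → ∀ τ : ∀ i, G i j, (∀ i < n, τ i = σ i) →
    ∃ (a : ∀ i, G i j) (c : ∀ i, G i (j + k)), Rel G p h j k a c ∧
      (∀ i < m, a i = 0) ∧ (∀ i < m, c i = 0) ∧ ∀ i < n', a i = τ i

lemma Dns.mono {j k m n n₂ : ℕ} (hd : Dns G p h j k m n) (hn : n ≤ n₂) :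
    Dns G p h j k m n₂ :=
  fun n' hn' τ hτ => hd n' (hn.trans hn') τ (fun i hi => hτ i (lt_of_lt_of_le hi hn))

lemma SDs.dns {j k m : ℕ} (hs : SDs G p h j k m) : ∃ n, Dns G p h j k m n := by
  obtain ⟨n, σ, hσ⟩ := hs
  refine ⟨n, fun n' hn' τ hτ => ?_⟩
  obtain ⟨a₁, c₁, hr₁, ha₁, hc₁, hm₁⟩ := hσ n' hn' (fun i => τ i + σ i)
    (fun i hi => by show τ i + σ i = σ i; rw [hτ i hi, zero_add])
  obtain ⟨a₂, c₂, hr₂, ha₂, hc₂, hm₂⟩ := hσ n' hn' σ (fun _ _ => rfl)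
  refine ⟨fun i => a₁ i - a₂ i, fun i => c₁ i - c₂ i, Rel.sub G p h hr₁ hr₂,
    fun i hi => by show a₁ i - a₂ i = 0; rw [ha₁ i hi, ha₂ i hi, sub_zero],
    fun i hi => by show c₁ i - c₂ i = 0; rw [hc₁ i hi, hc₂ i hi, sub_zero],
    fun i hi => by show a₁ i - a₂ i = τ i; rw [hm₁ i hi, hm₂ i hi]; abel⟩

lemma not_SDs_elim {j k m : ℕ} (hk : ¬ SDs G p h j k m) (n : ℕ) (σ : ∀ i, G i j) :
    ∃ (n' : ℕ) (τ : ∀ i, G i j), n ≤ n' ∧ (∀ i < n, τ i = σ i) ∧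
      ∀ (a : ∀ i, G i j) (c : ∀ i, G i (j + k)), Rel G p h j k a c →
        (∀ i < m, a i = 0) → (∀ i < m, c i = 0) → ∃ i < n', a i ≠ τ i := by
  by_contra hcon
  push_neg at hcon
  apply hk
  refine ⟨n, σ, fun n' hn' τ hτ => ?_⟩
  obtain ⟨a, c, hr, ha, hc, hmatch⟩ := hcon n' τ hn' hτ
  exact ⟨a, c, hr, ha, hc, hmatch⟩


lemma exists_good_k [∀ i j, Countable (G i j)] (j : ℕ)
    (htriv : ∀ g : ∀ i, G i j, ∃ k c, Rel G p h j k g c) :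
    ∃ k, ∀ m, ∃ n, Dns G p h j k m n := by
  by_contra hcon
  push_neg at hcon
  have hcon' : ∀ k, ∃ m, ¬ SDs G p h j k m := by
    intro k
    obtain ⟨m, hm⟩ := hcon k
    exact ⟨m, fun hs => by obtain ⟨n, hn⟩ := SDs.dns G p h hs; exact hm n hn⟩
  choose m hm using hcon'
  -- countable index of constraints
  let K := Σ k : ℕ, (∀ i : Fin (m k), G i j) × (∀ i : Fin (m k), G i (j + k))
  haveI : Countable K := inferInstance
  haveI : Nonempty K := ⟨⟨0, fun _ => 0, fun _ => 0⟩⟩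
  obtain ⟨e, he⟩ := exists_surjective_nat K
  -- one diagonalization step against a single constraint
  have hstep : ∀ (κ : K) (q : ℕ × (∀ i, G i j)), ∃ q' : ℕ × (∀ i, G i j),
      q.1 < q'.1 ∧ (∀ i < q.1, q'.2 i = q.2 i) ∧
      ∀ (a : ∀ i, G i j) (c : ∀ i, G i (j + κ.1)), Rel G p h j κ.1 a c →
        (∀ i : Fin (m κ.1), a i = κ.2.1 i) → (∀ i : Fin (m κ.1), c i = κ.2.2 i) →
        ∃ i < q'.1, a i ≠ q'.2 i := by
    intro κ q
    by_cases H : ∃ (ab : ∀ i, G i j) (cb : ∀ i, G i (j + κ.1)), Rel G p h j κ.1 ab cb ∧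
        (∀ i : Fin (m κ.1), ab i = κ.2.1 i) ∧ (∀ i : Fin (m κ.1), cb i = κ.2.2 i)
    · obtain ⟨ab, cb, hrel, hab, hcb⟩ := H
      obtain ⟨n', τ₀, hn', hτ₀, hav⟩ :=
        not_SDs_elim G p h (hm κ.1) q.1 (fun i => q.2 i - ab i)
      refine ⟨(max n' q.1 + 1, fun i => τ₀ i + ab i), by simp, ?_, ?_⟩
      · intro i hi
        show τ₀ i + ab i = q.2 i
        rw [hτ₀ i hi]; abel
      · intro a c hr hma hmc
        obtain ⟨i, hi, hne⟩ := hav (fun i => a i - ab i) (fun i => c i - cb i)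
          (Rel.sub G p h hr hrel)
          (fun i hi => by show a i - ab i = 0; rw [hma ⟨i, hi⟩, hab ⟨i, hi⟩, sub_self])
          (fun i hi => by show c i - cb i = 0; rw [hmc ⟨i, hi⟩, hcb ⟨i, hi⟩, sub_self])
        refine ⟨i, by simp; omega, fun hEq => hne ?_⟩
        show a i - ab i = τ₀ i
        rw [hEq]; show τ₀ i + ab i - ab i = τ₀ i; abel
    · exact ⟨(q.1 + 1, q.2), Nat.lt_succ_self _, fun _ _ => rfl,
        fun a c hr hma hmc => absurd ⟨a, c, hr, hma, hmc⟩ H⟩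
  -- the diagonal sequence of conditions
  let F : ℕ → ℕ × (∀ i, G i j) := fun t =>
    Nat.rec ((0 : ℕ), fun i => (0 : G i j)) (fun t q => Classical.choose (hstep (e t) q)) t
  have hFs : ∀ t, F (t + 1) = Classical.choose (hstep (e t) (F t)) := fun _ => rfl
  have hF1 : ∀ t, (F t).1 < (F (t + 1)).1 := fun t => by
    rw [hFs t]; exact (Classical.choose_spec (hstep (e t) (F t))).1
  have hF2 : ∀ t, ∀ i < (F t).1, (F (t + 1)).2 i = (F t).2 i := fun t => by
    rw [hFs t]; exact (Classical.choose_spec (hstep (e t) (F t))).2.1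
  have hF3 : ∀ t, ∀ (a : ∀ i, G i j) (c : ∀ i, G i (j + (e t).1)),
      Rel G p h j (e t).1 a c →
      (∀ i : Fin (m (e t).1), a i = (e t).2.1 i) → (∀ i : Fin (m (e t).1), c i = (e t).2.2 i) →
      ∃ i < (F (t + 1)).1, a i ≠ (F (t + 1)).2 i := fun t => by
    rw [hFs t]; exact (Classical.choose_spec (hstep (e t) (F t))).2.2
  have hFmono : ∀ t t', t ≤ t' → (F t).1 ≤ (F t').1 := by
    intro t t' htt
    induction t' with
    | zero => have : t = 0 := by omega
              rw [this]
    | succ s ih =>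
      rcases Nat.lt_or_ge t (s + 1) with hlt | hge
      · exact le_trans (ih (by omega)) (hF1 s).le
      · have : t = s + 1 := by omega
        rw [this]
  have hFge : ∀ t, t ≤ (F t).1 := by
    intro t
    induction t with
    | zero => exact Nat.zero_le _
    | succ s ih => have h1 := hF1 s; omega
  -- the generic element
  let g : ∀ i, G i j := fun i => (F (i + 1)).2 i
  have key : ∀ (d t : ℕ), ∀ i < (F t).1, (F (t + d)).2 i = (F t).2 i := by
    intro d
    induction d with
    | zero => intro t i _; rfl
    | succ s ih =>
      intro t i hi
      have h1 : (F (t + s + 1)).2 i = (F (t + s)).2 i :=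
        hF2 (t + s) i (lt_of_lt_of_le hi (hFmono t (t + s) (by omega)))
      have : t + (s + 1) = (t + s) + 1 := by omega
      rw [this, h1, ih t i hi]
  have hstab : ∀ t, ∀ i < (F t).1, g i = (F t).2 i := by
    intro t i hi
    show (F (i + 1)).2 i = (F t).2 i
    rcases Nat.le_total (i + 1) t with hle | hge
    · obtain ⟨d, rfl⟩ := Nat.exists_eq_add_of_le hle
      exact (key d (i + 1) i (lt_of_lt_of_le (Nat.lt_succ_self i) (hFge (i + 1)))).symm
    · obtain ⟨d, hd⟩ := Nat.exists_eq_add_of_le hge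
      rw [hd]
      exact key d t i hi
  -- contradiction with htriv
  obtain ⟨k, c, hrel⟩ := htriv g
  obtain ⟨t, ht⟩ := he ⟨k, fun i => g i, fun i => c i⟩
  have hav := hF3 t
  rw [ht] at hav
  obtain ⟨i, hi, hne⟩ := hav g c hrel (fun _ => rfl) (fun _ => rfl)
  exact hne (hstab (t + 1) i hi)

lemma tail_in (j k : ℕ) (hd : ∀ m, ∃ n, Dns G p h j k m n) :
    ∃ N₀, ∀ g : ∀ i, G i j, (∀ i < N₀, g i = 0) → ∃ c, Rel G p h j k g c := by
  choose n hn using hd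
  let N : ℕ → ℕ := fun m => (Finset.range (m + 1)).sup n + m
  have hNn : ∀ m, n m ≤ N m :=
    fun m => le_trans (Finset.le_sup (Finset.self_mem_range_succ m)) (Nat.le_add_right _ m)
  have hNle : ∀ m m', m ≤ m' → N m ≤ N m' := by
    intro m m' hmm
    have h1 : (Finset.range (m + 1)).sup n ≤ (Finset.range (m' + 1)).sup n :=
      Finset.sup_mono (Finset.range_subset_range.mpr (by omega))
    show (Finset.range (m + 1)).sup n + m ≤ (Finset.range (m' + 1)).sup n + m'
    omega
  have hNge : ∀ m, m ≤ N m := fun m => Nat.le_add_left m _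
  have hDN : ∀ m, Dns G p h j k m (N m) := fun m => Dns.mono G p h (hn m) (hNn m)
  refine ⟨N 2, ?_⟩
  intro g hg
  have hstep : ∀ (t : ℕ) (r : ∀ i, G i j), (∀ i < N (t + 2), r i = 0) →
      ∃ ac : (∀ i, G i j) × (∀ i, G i (j + k)), Rel G p h j k ac.1 ac.2 ∧
        (∀ i < t + 2, ac.1 i = 0) ∧ (∀ i < t + 2, ac.2 i = 0) ∧
        ∀ i < N (t + 3), ac.1 i = r i := by
    intro t r hr
    obtain ⟨a, c, h1, h2, h3, h4⟩ := hDN (t + 2) (N (t + 3)) (hNle _ _ (by omega)) r hr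
    exact ⟨(a, c), h1, h2, h3, h4⟩
  let R : ∀ t : ℕ, {r : ∀ i, G i j // ∀ i < N (t + 2), r i = 0} := fun t =>
    Nat.rec ⟨g, hg⟩ (fun t ih =>
      ⟨fun i => ih.1 i - (Classical.choose (hstep t ih.1 ih.2)).1 i, by
        intro i hi
        show ih.1 i - (Classical.choose (hstep t ih.1 ih.2)).1 i = 0
        rw [(Classical.choose_spec (hstep t ih.1 ih.2)).2.2.2 i hi, sub_self]⟩) t
  let a : ℕ → ∀ i, G i j := fun t => (Classical.choose (hstep t (R t).1 (R t).2)).1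
  let c : ℕ → ∀ i, G i (j + k) := fun t => (Classical.choose (hstep t (R t).1 (R t).2)).2
  have hRsucc : ∀ t i, (R (t + 1)).1 i = (R t).1 i - a t i := fun _ _ => rfl
  have spec : ∀ t, Rel G p h j k (a t) (c t) ∧ (∀ i < t + 2, a t i = 0) ∧
      (∀ i < t + 2, c t i = 0) ∧ ∀ i < N (t + 3), a t i = (R t).1 i :=
    fun t => Classical.choose_spec (hstep t (R t).1 (R t).2)
  have hsum : ∀ T i, (R T).1 i = g i - ∑ t ∈ Finset.range T, a t i := by
    intro T
    induction T with
    | zero => intro i; show g i = g i - ∑ t ∈ Finset.range 0, a t i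
              rw [Finset.sum_range_zero, sub_zero]
    | succ T ih =>
      intro i
      rw [hRsucc T i, ih i, Finset.sum_range_succ]
      abel
  have hgi : ∀ i, g i = ∑ t ∈ Finset.range i, a t i := by
    intro i
    have h0 : (R i).1 i = 0 := (R i).2 i (by have := hNge (i + 2); omega)
    have h1 := hsum i i
    rw [h0] at h1
    have := sub_eq_zero.mp h1.symm
    exact this
  refine ⟨fun i => ∑ t ∈ Finset.range i, c t i, ?_⟩
  intro i
  show hIter G h i j k (g i) = (∑ t ∈ Finset.range i, c t i) -
      p i (j + k) (∑ t ∈ Finset.range (i + 1), c t (i + 1))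
  have hlast : c i (i + 1) = 0 := (spec i).2.2.1 (i + 1) (by omega)
  rw [Finset.sum_range_succ, hlast, add_zero, hgi i, map_sum, map_sum]
  rw [← Finset.sum_sub_distrib]
  exact Finset.sum_congr rfl (fun t _ => (spec t).1 i)

theorem main (hcomm : ∀ i j (g : G (i + 1) j), h i j (p i j g) = p i (j + 1) (h (i + 1) j g))
    [∀ i j, Countable (G i j)]
    (htriv : ∀ j (g : ∀ i, G i j), ∃ k c, Rel G p h j k g c) :
    ∀ j, ∃ k, 0 < k ∧ ∀ g : ∀ i, G i j, ∃ c, Rel G p h j k g c := by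
  intro j
  obtain ⟨k, hk⟩ := exists_good_k G p h j (htriv j)
  obtain ⟨N₀, hN₀⟩ := tail_in G p h j k hk
  have hall : ∀ g : ∀ i, G i j, ∃ c, Rel G p h j k g c := by
    intro g
    have hc2 : ∃ c, Rel G p h j k (fun i => if i < N₀ then 0 else g i) c :=
      hN₀ _ (fun i hi => by simp [hi])
    obtain ⟨c₂, hc₂⟩ := hc2
    have hhead : ∀ i, N₀ ≤ i →
        hIter G h i j k (g i - (if i < N₀ then 0 else g i)) = 0 := by
      intro i hi
      rw [if_neg (by omega), sub_self, map_zero]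
    obtain ⟨c₁, hc₁⟩ := exists_boundary G p (j + k) N₀
      (fun i => hIter G h i j k (g i - (if i < N₀ then 0 else g i))) hhead
    have h1 : Rel G p h j k (fun i => g i - (if i < N₀ then 0 else g i)) c₁ := hc₁
    have h2 := Rel.add G p h h1 hc₂
    refine ⟨fun i => c₁ i + c₂ i, fun i => ?_⟩
    have h3 := h2 i
    simpa using h3
  refine ⟨k + 1, Nat.succ_pos k, fun g => ?_⟩
  obtain ⟨c, hc⟩ := hall g
  refine ⟨fun i => h i (j + k) (c i), fun i => ?_⟩
  show h i (j + k) (hIter G h i j k (g i)) = _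
  rw [hc i, map_sub, hcomm]
  rfl

end Stmt3Aux

/-- Theorem A(c): for a direct sequence of towers of countable abelian groups, set
`Γ_j = lim¹_i G_{ij}`, the cokernel of `d_j : ∏_i G_{ij} → ∏_i G_{ij}`,
`d_j(g)_i = g_i − p_{ij}(g_{i+1})`.  An element of `Γ_j` is (the class of) a family
`g : ∀ i, G i j`; its image in `Γ_{j+k}` vanishes iff the coordinatewise image of `g`
under the composite horizontal map lies in the range of `d_{j+k}`.  If the colimit of
the `Γ_j` is trivial, then for each `j` there is `k > j` such that the composite
homomorphism `Γ_j → Γ_k` is the zero homomorphism. -/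
theorem stmt_3 (G : ℕ → ℕ → Type*) [∀ i j, AddCommGroup (G i j)]
    [∀ i j, Countable (G i j)]
    (p : ∀ i j, G (i + 1) j →+ G i j) (h : ∀ i j, G i j →+ G i (j + 1))
    (hcomm : ∀ i j (g : G (i + 1) j), h i j (p i j g) = p i (j + 1) (h (i + 1) j g))
    (htriv : ∀ j (g : ∀ i, G i j), ∃ k, ∃ c : ∀ i, G i (j + k),
      ∀ i, hIter G h i j k (g i) = c i - p i (j + k) (c (i + 1))) :
    ∀ j, ∃ k, 0 < k ∧ ∀ g : ∀ i, G i j, ∃ c : ∀ i, G i (j + k),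
      ∀ i, hIter G h i j k (g i) = c i - p i (j + k) (c (i + 1)) :=
  Stmt3Aux.main G p h hcomm htriv
end

section
/- Let (A_i, α_i), (B_i, β_i), (C_i, γ_i) be towers of abelian groups, and let f = (f_i : A_i → C_i), u = (u_i : A_i → B_i), v = (v_i : B_i → C_i) be level morphisms with v_i ∘ u_i = f_i for all i. Suppose that the induced homomorphism lim¹_i A_i → lim¹_i B_i is the zero map and the induced homomorphism lim_i B_i → lim_i C_i is the zero map. Then there exist a tower of abelian groups (G_i, δ_i) and level morphisms s = (s_i : A_i → G_i), t = (t_i : G_i → C_i) with t_i ∘ s_i = f_i for all i, such that lim_i G_i = 0 and lim¹_i G_i = 0. -/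
open Finset

namespace Stmt5Aux

variable {A B C : ℕ → Type} [∀ i, AddCommGroup (A i)] [∀ i, AddCommGroup (B i)]
  [∀ i, AddCommGroup (C i)]

/-- truncation: zero out coordinates `< i` -/
def truncHom (i : ℕ) : (∀ j, A j) →+ (∀ j, A j) :=
  AddMonoidHom.mk' (fun z => fun j => if j < i then 0 else z j)
    (fun a b => by funext j; by_cases h : j < i <;> simp [h])

@[simp] lemma truncHom_apply (i j : ℕ) (z : ∀ j, A j) :
    truncHom i z j = if j < i then 0 else z j := rfl

variable (α : ∀ i, A (i+1) →+ A i)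

/-- the subgroup we quotient by -/
def Rsub (i : ℕ) : AddSubgroup (∀ j, A j) where
  carrier := {z | ∃ y : ∀ j, A j, (∀ j, j ≤ i → y j = 0) ∧
    ∀ j, i ≤ j → z j = y j - α j (y (j+1))}
  zero_mem' := ⟨0, fun _ _ => rfl, fun j _ => by simp⟩
  add_mem' := by
    rintro z w ⟨y, hy0, hy⟩ ⟨x, hx0, hx⟩
    exact ⟨y + x, fun j hj => by simp [hy0 j hj, hx0 j hj],
      fun j hj => by simp only [Pi.add_apply, map_add, hy j hj, hx j hj]; abel⟩
  neg_mem' := by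
    rintro z ⟨y, hy0, hy⟩
    exact ⟨-y, fun j hj => by simp [hy0 j hj],
      fun j hj => by simp only [Pi.neg_apply, map_neg, hy j hj]; abel⟩

lemma mem_Rsub {i : ℕ} {z : ∀ j, A j} :
    z ∈ Rsub α i ↔ ∃ y : ∀ j, A j, (∀ j, j ≤ i → y j = 0) ∧
      ∀ j, i ≤ j → z j = y j - α j (y (j+1)) := Iff.rfl

lemma lowSupp_mem_Rsub {i : ℕ} {z : ∀ j, A j} (h : ∀ j, i ≤ j → z j = 0) :
    z ∈ Rsub α i :=
  ⟨0, fun _ _ => rfl, fun j hj => by simp [h j hj]⟩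

/-- the tower of groups -/
abbrev Q (i : ℕ) : Type := (∀ j, A j) ⧸ Rsub α i

/-- bonding maps of the tower -/
def gdel (i : ℕ) : Q α (i+1) →+ Q α i :=
  QuotientAddGroup.map _ _ (truncHom (i+1)) (by
    rintro z ⟨y, hy0, hy⟩
    refine ⟨y, fun j hj => hy0 j (hj.trans (Nat.le_succ i)), fun j hj => ?_⟩
    by_cases h : j < i + 1
    · have h0 : y j = 0 := hy0 j (by omega)
      have h1 : y (j+1) = 0 := hy0 (j+1) (by omega)
      simp [h, h0, h1]
    · simpa [h] using hy j (by omega))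

@[simp] lemma gdel_mk (i : ℕ) (z : ∀ j, A j) :
    gdel α i (QuotientAddGroup.mk z) = QuotientAddGroup.mk (truncHom (i+1) z) := rfl

/-- the map from `A` into the tower -/
def gs (i : ℕ) : A i →+ Q α i :=
  (QuotientAddGroup.mk' (Rsub α i)).comp
    (AddMonoidHom.mk' (fun a => Pi.single i a) (fun a b => by
      funext j
      by_cases h : j = i
      · subst h; simp
      · simp [Pi.single_eq_of_ne h]))

lemma gs_apply (i : ℕ) (a : A i) :
    gs α i a = QuotientAddGroup.mk (Pi.single i a) := rfl

lemma gs_level (i : ℕ) (a : A (i+1)) :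
    gs α i (α i a) = gdel α i (gs α (i+1) a) := by
  rw [gs_apply, gs_apply, gdel_mk]
  have htr : truncHom (i+1) (Pi.single (i+1) a) = Pi.single (i+1) a := by
    funext j
    by_cases h : j < i + 1
    · rw [truncHom_apply, if_pos h, Pi.single_eq_of_ne (by omega)]
    · rw [truncHom_apply, if_neg h]
  rw [htr, QuotientAddGroup.eq]
  refine ⟨Pi.single (i+1) a, fun j hj => Pi.single_eq_of_ne (by omega) a, fun j hj => ?_⟩
  by_cases h : j = i
  · subst h; simp
  · by_cases h' : j = i + 1
    · subst h'; simp
    · simp [Pi.single_eq_of_ne h, Pi.single_eq_of_ne h',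
        Pi.single_eq_of_ne (show j + 1 ≠ i + 1 by omega)]

section Hmap

variable (β : ∀ i, B (i+1) →+ B i) (γ : ∀ i, C (i+1) →+ C i)
variable (f : ∀ i, A i →+ C i) (u : ∀ i, A i →+ B i) (v : ∀ i, B i →+ C i)
variable (h1 : ∀ a : ∀ i, A i, ∃ b : ∀ i, B i, ∀ i, u i (a i) = b i - β i (b (i + 1)))

/-- the canonical "sum" map `∏ A → ∏ C` extracted from `h1`/`h2`. -/
noncomputable def Hm (a : ∀ j, A j) : ∀ j, C j := fun j => v j ((h1 a).choose j)

lemma Hm_uniq (h2 : ∀ b : ∀ i, B i, (∀ i, β i (b (i + 1)) = b i) → ∀ i, v i (b i) = 0)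
    (a : ∀ j, A j) (b : ∀ j, B j)
    (hb : ∀ j, u j (a j) = b j - β j (b (j+1))) (j : ℕ) :
    Hm β u v h1 a j = v j (b j) := by
  set b' := (h1 a).choose with hb'
  have hspec : ∀ i, u i (a i) = b' i - β i (b' (i+1)) := (h1 a).choose_spec
  have hthread : ∀ i, β i ((b' - b) (i+1)) = (b' - b) i := by
    intro i
    have e3 : b' i - β i (b' (i+1)) = b i - β i (b (i+1)) := (hspec i).symm.trans (hb i)
    have e4 : β i (b' (i+1)) - β i (b (i+1)) - (b' i - b i)
        = (b i - β i (b (i+1))) - (b' i - β i (b' (i+1))) := by abel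
    rw [← e3, sub_self] at e4
    have e5 := sub_eq_zero.mp e4
    simpa using e5
  have hz := h2 (b' - b) hthread j
  simp only [Pi.sub_apply, map_sub, sub_eq_zero] at hz
  exact hz

lemma Hm_zero (h2 : ∀ b : ∀ i, B i, (∀ i, β i (b (i + 1)) = b i) → ∀ i, v i (b i) = 0)
    (j : ℕ) : Hm β u v h1 (0 : ∀ j, A j) j = 0 := by
  have : ∀ j, u j ((0 : ∀ j, A j) j) = (0 : ∀ j, B j) j - β j ((0 : ∀ j, B j) (j+1)) := by
    intro j; simp
  rw [Hm_uniq β u v h1 h2 _ 0 this j]; simp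

lemma Hm_add (h2 : ∀ b : ∀ i, B i, (∀ i, β i (b (i + 1)) = b i) → ∀ i, v i (b i) = 0)
    (a a' : ∀ j, A j) (j : ℕ) :
    Hm β u v h1 (a + a') j = Hm β u v h1 a j + Hm β u v h1 a' j := by
  have ha := (h1 a).choose_spec
  have ha' := (h1 a').choose_spec
  have hsum : ∀ j, u j ((a + a') j) = ((h1 a).choose + (h1 a').choose) j
      - β j (((h1 a).choose + (h1 a').choose) (j+1)) := by
    intro j
    simp only [Pi.add_apply, map_add, ha j, ha' j]
    abel
  rw [Hm_uniq β u v h1 h2 (a + a') _ hsum j]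
  show v j (_ + _) = _
  rw [map_add]
  rfl

lemma Hm_dA (hu : ∀ i a, u i (α i a) = β i (u (i + 1) a))
    (huv : ∀ i a, v i (u i a) = f i a)
    (h2 : ∀ b : ∀ i, B i, (∀ i, β i (b (i + 1)) = b i) → ∀ i, v i (b i) = 0)
    (y : ∀ j, A j) (j : ℕ) :
    Hm β u v h1 (fun k => y k - α k (y (k+1))) j = f j (y j) := by
  have hb : ∀ k, u k ((fun k => y k - α k (y (k+1))) k)
      = (fun k => u k (y k)) k - β k ((fun k => u k (y k)) (k+1)) := by
    intro k
    simp only [map_sub, hu k (y (k+1))]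
  rw [Hm_uniq β u v h1 h2 _ (fun k => u k (y k)) hb j]
  exact huv j (y j)

lemma Hm_succ (hv : ∀ i b, v i (β i b) = γ i (v (i + 1) b))
    (huv : ∀ i a, v i (u i a) = f i a)
    (a : ∀ j, A j) (j : ℕ) :
    Hm β u v h1 a j = f j (a j) + γ j (Hm β u v h1 a (j+1)) := by
  have hspec := (h1 a).choose_spec j
  have h3 : v j (u j (a j)) = v j ((h1 a).choose j) - γ j (v (j+1) ((h1 a).choose (j+1))) := by
    rw [hspec, map_sub, hv j ((h1 a).choose (j+1))]
  rw [huv j (a j)] at h3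
  show v j ((h1 a).choose j) = f j (a j) + γ j (v (j+1) ((h1 a).choose (j+1)))
  rw [h3]; abel

lemma Hm_single_zero
    (h2 : ∀ b : ∀ i, B i, (∀ i, β i (b (i + 1)) = b i) → ∀ i, v i (b i) = 0)
    (x : A 0) (j : ℕ) (hj : 0 < j) :
    Hm β u v h1 (Pi.single 0 x) j = 0 := by
  set b := (h1 (Pi.single 0 x)).choose with hb
  have hspec : ∀ i, u i (Pi.single 0 x i) = b i - β i (b (i+1)) :=
    (h1 (Pi.single 0 x)).choose_spec
  have htail : ∀ k, β (k+1) (b (k+2)) = b (k+1) := by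
    intro k
    have := hspec (k+1)
    rw [Pi.single_eq_of_ne (by omega), map_zero] at this
    exact (sub_eq_zero.mp this.symm).symm
  set w : ∀ j, B j := fun j => Nat.rec (β 0 (b 1)) (fun k _ => b (k+1)) j with hw
  have hthread : ∀ i, β i (w (i+1)) = w i := by
    intro i
    cases i with
    | zero => rfl
    | succ k => exact htail k
  have hz := h2 w hthread j
  obtain ⟨k, rfl⟩ : ∃ k, j = k + 1 := ⟨j - 1, by omega⟩
  exact hz

lemma Hm_single_of_lt
    (hu : ∀ i a, u i (α i a) = β i (u (i + 1) a))
    (huv : ∀ i a, v i (u i a) = f i a)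
    (h2 : ∀ b : ∀ i, B i, (∀ i, β i (b (i + 1)) = b i) → ∀ i, v i (b i) = 0) :
    ∀ i (x : A i) (j : ℕ), i < j → Hm β u v h1 (Pi.single i x) j = 0 := by
  intro i
  induction i with
  | zero => exact fun x j hj => Hm_single_zero β u v h1 h2 x j hj
  | succ i ih =>
    intro x j hj
    have hsplit : Pi.single (i+1) x
        = (fun k => Pi.single (i+1) x k - α k (Pi.single (i+1) x (k+1)))
          + Pi.single i (α i x) := by
      funext k
      by_cases hk : k = i
      · subst hk
        simp [Pi.single_eq_of_ne (show k ≠ k + 1 by omega)]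
      · by_cases hk' : k = i + 1
        · subst hk'
          simp [Pi.single_eq_of_ne (show i + 1 + 1 ≠ i + 1 by omega),
            Pi.single_eq_of_ne (show i + 1 ≠ i by omega)]
        · simp [Pi.single_eq_of_ne hk, Pi.single_eq_of_ne hk',
            Pi.single_eq_of_ne (show k + 1 ≠ i + 1 by omega)]
    rw [hsplit, Hm_add β u v h1 h2,
      Hm_dA α β f u v h1 hu huv h2 (Pi.single (i+1) x) j,
      Pi.single_eq_of_ne (show j ≠ i + 1 by omega), map_zero,
      ih (α i x) j (by omega)]
    simp

lemma Hm_single_self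
    (hu : ∀ i a, u i (α i a) = β i (u (i + 1) a))
    (hv : ∀ i b, v i (β i b) = γ i (v (i + 1) b))
    (huv : ∀ i a, v i (u i a) = f i a)
    (h2 : ∀ b : ∀ i, B i, (∀ i, β i (b (i + 1)) = b i) → ∀ i, v i (b i) = 0)
    (i : ℕ) (x : A i) :
    Hm β u v h1 (Pi.single i x) i = f i x := by
  rw [Hm_succ β γ f u v h1 hv huv (Pi.single i x) i,
    Hm_single_of_lt α β f u v h1 hu huv h2 i x (i+1) (by omega),
    map_zero, add_zero, Pi.single_eq_same]

end Hmap


section T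

variable (β : ∀ i, B (i+1) →+ B i) (γ : ∀ i, C (i+1) →+ C i)
variable (f : ∀ i, A i →+ C i) (u : ∀ i, A i →+ B i) (v : ∀ i, B i →+ C i)
variable (h1 : ∀ a : ∀ i, A i, ∃ b : ∀ i, B i, ∀ i, u i (a i) = b i - β i (b (i + 1)))

/-- the map from the tower to `C` -/
noncomputable def gt
    (hu : ∀ i a, u i (α i a) = β i (u (i + 1) a))
    (huv : ∀ i a, v i (u i a) = f i a)
    (h2 : ∀ b : ∀ i, B i, (∀ i, β i (b (i + 1)) = b i) → ∀ i, v i (b i) = 0)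
    (i : ℕ) : Q α i →+ C i :=
  QuotientAddGroup.lift (Rsub α i)
    (AddMonoidHom.mk' (fun z => Hm β u v h1 (truncHom i z) i)
      (fun z w => by
        show Hm β u v h1 (truncHom i (z + w)) i = _
        rw [map_add, Hm_add β u v h1 h2]))
    (by
      rintro z ⟨y, hy0, hy⟩
      have htr : truncHom i z = fun k => y k - α k (y (k+1)) := by
        funext k
        by_cases hk : k < i
        · rw [truncHom_apply, if_pos hk, hy0 k (by omega), hy0 (k+1) (by omega)]
          simp
        · rw [truncHom_apply, if_neg hk]
          exact hy k (by omega)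
      show Hm β u v h1 (truncHom i z) i = 0
      rw [htr, Hm_dA α β f u v h1 hu huv h2 y i, hy0 i le_rfl, map_zero])

variable (hu : ∀ i a, u i (α i a) = β i (u (i + 1) a))
    (hv : ∀ i b, v i (β i b) = γ i (v (i + 1) b))
    (huv : ∀ i a, v i (u i a) = f i a)
    (h2 : ∀ b : ∀ i, B i, (∀ i, β i (b (i + 1)) = b i) → ∀ i, v i (b i) = 0)

lemma gt_mk (i : ℕ) (z : ∀ j, A j) :
    gt α β f u v h1 hu huv h2 i (QuotientAddGroup.mk z)
      = Hm β u v h1 (truncHom i z) i := rfl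

include hv in
lemma gt_level (i : ℕ) (g : Q α (i+1)) :
    gt α β f u v h1 hu huv h2 i (gdel α i g)
      = γ i (gt α β f u v h1 hu huv h2 (i+1) g) := by
  refine QuotientAddGroup.induction_on g (fun z => ?_)
  rw [gdel_mk, gt_mk, gt_mk]
  have htr : truncHom i (truncHom (i+1) z) = truncHom (i+1) z := by
    funext k
    by_cases hk : k < i
    · rw [truncHom_apply, if_pos hk, truncHom_apply, if_pos (by omega)]
    · rw [truncHom_apply, if_neg hk]
  rw [htr, Hm_succ β γ f u v h1 hv huv (truncHom (i+1) z) i,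
    truncHom_apply, if_pos (by omega), map_zero, zero_add]

include hv in
lemma gt_gs (i : ℕ) (a : A i) :
    gt α β f u v h1 hu huv h2 i (gs α i a) = f i a := by
  rw [gs_apply, gt_mk]
  have htr : truncHom i (Pi.single i a) = Pi.single i a := by
    funext k
    by_cases hk : k < i
    · rw [truncHom_apply, if_pos hk, Pi.single_eq_of_ne (by omega)]
    · rw [truncHom_apply, if_neg hk]
  rw [htr, Hm_single_self α β γ f u v h1 hu hv huv h2 i a]

end T

section Lim

variable (α : ∀ i, A (i+1) →+ A i)

lemma lim_zero (g : ∀ i, Q α i) (hg : ∀ i, gdel α i (g (i+1)) = g i) (i₀ : ℕ) :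
    g i₀ = 0 := by
  have hrep : ∀ i, ∃ z : ∀ j, A j, QuotientAddGroup.mk z = g i := fun i =>
    QuotientAddGroup.mk_surjective (g i)
  choose z hz using hrep
  have hmem : ∀ k, -(truncHom (k+1) (z (k+1))) + z k ∈ Rsub α k := by
    intro k
    refine QuotientAddGroup.eq.mp ?_
    rw [hz k, ← hg k, ← hz (k+1), gdel_mk]
  choose y hy0 hy using hmem
  have claim : ∀ d k j, j = k + d →
      z k j = ∑ l ∈ Finset.Ico k (j+1), (y l j - α j (y l (j+1))) := by
    intro d
    induction d with
    | zero =>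
      intro k j hj
      have hjk : j = k := by omega
      subst hjk
      rw [Finset.sum_eq_sum_Ico_succ_bot (show j < j + 1 by omega), Finset.Ico_self,
        Finset.sum_empty, add_zero]
      have := hy j j le_rfl
      rw [Pi.add_apply, Pi.neg_apply, truncHom_apply, if_pos (by omega), neg_zero,
        zero_add] at this
      exact this
    | succ d ih =>
      intro k j hj
      have hrel := hy k j (by omega)
      rw [Pi.add_apply, Pi.neg_apply, truncHom_apply, if_neg (by omega)] at hrel
      have hzk : z k j = (y k j - α j (y k (j+1))) + z (k+1) j := by
        rw [← hrel]; abel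
      rw [hzk, ih (k+1) j (by omega),
        Finset.sum_eq_sum_Ico_succ_bot (show k < j + 1 by omega)]
  have hY : z i₀ ∈ Rsub α i₀ := by
    refine ⟨fun j => ∑ l ∈ Finset.Ico i₀ (j+1), y l j, fun j hj => ?_, fun j hj => ?_⟩
    · exact Finset.sum_eq_zero (fun l hl => hy0 l j (by
        simp only [Finset.mem_Ico] at hl; omega))
    · rw [claim (j - i₀) i₀ j (by omega)]
      show _ = (∑ l ∈ Finset.Ico i₀ (j+1), y l j) - α j (∑ l ∈ Finset.Ico i₀ (j+1+1), y l (j+1))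
      rw [Finset.sum_Ico_succ_top (show i₀ ≤ j + 1 by omega) (fun l => y l (j+1)),
        hy0 (j+1) (j+1) le_rfl, add_zero, map_sum, Finset.sum_sub_distrib]
  rw [← hz i₀]
  exact (QuotientAddGroup.eq_zero_iff (z i₀)).mpr hY

lemma lim1_zero (g : ∀ i, Q α i) :
    ∃ c : ∀ i, Q α i, ∀ i, c i - gdel α i (c (i+1)) = g i := by
  have hrep : ∀ i, ∃ z : ∀ j, A j, QuotientAddGroup.mk z = g i := fun i =>
    QuotientAddGroup.mk_surjective (g i)
  choose z hz using hrep
  set w : ∀ i, ∀ j, A j := fun i => truncHom i (z i) with hw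
  refine ⟨fun i => QuotientAddGroup.mk (fun j => ∑ k ∈ Finset.Ico i (j+1), w k j), ?_⟩
  intro i
  have key : (fun j => ∑ k ∈ Finset.Ico i (j+1), w k j)
      - truncHom (i+1) (fun j => ∑ k ∈ Finset.Ico (i+1) (j+1), w k j) = w i := by
    funext j
    rcases Nat.lt_or_ge j i with hj | hj
    · rw [Pi.sub_apply, truncHom_apply, if_pos (by omega), Finset.Ico_eq_empty (by omega),
        Finset.sum_empty, sub_zero]
      rw [hw]
      simp only [truncHom_apply, if_pos hj]
    · rw [Pi.sub_apply, Finset.sum_eq_sum_Ico_succ_bot (show i < j + 1 by omega)]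
      by_cases hj' : j < i + 1
      · rw [truncHom_apply, if_pos hj', Finset.Ico_eq_empty (by omega), Finset.sum_empty,
          add_zero, sub_zero]
      · rw [truncHom_apply, if_neg hj']
        abel
  have hwz : QuotientAddGroup.mk (w i) = g i := by
    rw [← hz i]
    refine QuotientAddGroup.eq.mpr (lowSupp_mem_Rsub α (fun j hj => ?_))
    rw [Pi.add_apply, Pi.neg_apply, hw]
    simp only [truncHom_apply, if_neg (by omega : ¬ j < i)]
    abel
  calc QuotientAddGroup.mk (fun j => ∑ k ∈ Finset.Ico i (j+1), w k j)
        - gdel α i (QuotientAddGroup.mk (fun j => ∑ k ∈ Finset.Ico (i+1) (j+1), w k j))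
      = QuotientAddGroup.mk ((fun j => ∑ k ∈ Finset.Ico i (j+1), w k j)
        - truncHom (i+1) (fun j => ∑ k ∈ Finset.Ico (i+1) (j+1), w k j)) := by
        rw [gdel_mk]; rfl
    _ = QuotientAddGroup.mk (w i) := by rw [key]
    _ = g i := hwz

end Lim

end Stmt5Aux


/-- Theorem B: if a level morphism `f : (A_i) → (C_i)` of towers of abelian groups
factors through a tower `(B_i)` in such a way that the induced map
`lim¹ A_i → lim¹ B_i` is zero and the induced map `lim B_i → lim C_i` is zero,
then `f` factors through a tower of abelian groups `(G_i)` with `lim G_i = 0`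
and `lim¹ G_i = 0`.

Here `lim` is the group of threads; `lim¹` is the cokernel of
`d(g)_i = g_i − p_i(g_{i+1})`, so "`lim¹ A → lim¹ B` is zero" says that the image of
any family `a : ∏ A_i` lies in the range of `d_B`, "`lim G = 0`" says every thread of
`G` is zero, and "`lim¹ G = 0`" says `d_G` is surjective. -/
theorem stmt_5 (A B C : ℕ → Type) [∀ i, AddCommGroup (A i)] [∀ i, AddCommGroup (B i)]
    [∀ i, AddCommGroup (C i)]
    (α : ∀ i, A (i + 1) →+ A i) (β : ∀ i, B (i + 1) →+ B i) (γ : ∀ i, C (i + 1) →+ C i)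
    (f : ∀ i, A i →+ C i) (u : ∀ i, A i →+ B i) (v : ∀ i, B i →+ C i)
    (hf : ∀ i a, f i (α i a) = γ i (f (i + 1) a))
    (hu : ∀ i a, u i (α i a) = β i (u (i + 1) a))
    (hv : ∀ i b, v i (β i b) = γ i (v (i + 1) b))
    (huv : ∀ i a, v i (u i a) = f i a)
    (h1 : ∀ a : ∀ i, A i, ∃ b : ∀ i, B i, ∀ i, u i (a i) = b i - β i (b (i + 1)))
    (h2 : ∀ b : ∀ i, B i, (∀ i, β i (b (i + 1)) = b i) → ∀ i, v i (b i) = 0) :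
    ∃ (G : ℕ → AddCommGrpCat) (δ : ∀ i, ↥(G (i + 1)) →+ ↥(G i))
      (s : ∀ i, A i →+ ↥(G i)) (t : ∀ i, ↥(G i) →+ C i),
      (∀ i a, s i (α i a) = δ i (s (i + 1) a)) ∧
      (∀ i g, t i (δ i g) = γ i (t (i + 1) g)) ∧
      (∀ i a, t i (s i a) = f i a) ∧
      (∀ g : ∀ i, ↥(G i), (∀ i, δ i (g (i + 1)) = g i) → ∀ i, g i = 0) ∧
      (∀ g : ∀ i, ↥(G i), ∃ c : ∀ i, ↥(G i), ∀ i, c i - δ i (c (i + 1)) = g i) := by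
  classical
  refine ⟨fun i => AddCommGrpCat.of (ULift (Stmt5Aux.Q α i)),
    fun i => AddEquiv.ulift.symm.toAddMonoidHom.comp
      ((Stmt5Aux.gdel α i).comp AddEquiv.ulift.toAddMonoidHom),
    fun i => AddEquiv.ulift.symm.toAddMonoidHom.comp (Stmt5Aux.gs α i),
    fun i => (Stmt5Aux.gt α β f u v h1 hu huv h2 i).comp AddEquiv.ulift.toAddMonoidHom,
    ?_, ?_, ?_, ?_, ?_⟩
  · intro i a
    simp only [AddMonoidHom.comp_apply, AddEquiv.coe_toAddMonoidHom,
      AddEquiv.apply_symm_apply]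
    exact congrArg _ (Stmt5Aux.gs_level α i a)
  · intro i g
    simp only [AddMonoidHom.comp_apply, AddEquiv.coe_toAddMonoidHom,
      AddEquiv.apply_symm_apply]
    exact Stmt5Aux.gt_level α β γ f u v h1 hu hv huv h2 i (AddEquiv.ulift g)
  · intro i a
    simp only [AddMonoidHom.comp_apply, AddEquiv.coe_toAddMonoidHom,
      AddEquiv.apply_symm_apply]
    exact Stmt5Aux.gt_gs α β γ f u v h1 hu hv huv h2 i a
  · intro g hg i
    have hg' : ∀ i, Stmt5Aux.gdel α i (AddEquiv.ulift (g (i+1))) = AddEquiv.ulift (g i) := by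
      intro i
      have := congrArg (fun x => AddEquiv.ulift x) (hg i)
      simpa using this
    have hz := Stmt5Aux.lim_zero α (fun i => AddEquiv.ulift (g i)) hg' i
    exact AddEquiv.ulift.injective (by rw [hz, map_zero])
  · intro g
    obtain ⟨c, hc⟩ := Stmt5Aux.lim1_zero α (fun i => AddEquiv.ulift (g i))
    refine ⟨fun i => AddEquiv.ulift.symm (c i), fun i => ?_⟩
    apply AddEquiv.ulift.injective
    rw [map_sub]
    simp only [AddMonoidHom.comp_apply, AddEquiv.coe_toAddMonoidHom,
      AddEquiv.apply_symm_apply]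
    exact hc i
end

section
/- Let f = (f_i : A_i → C_i) be a level morphism between towers of abelian groups (A_i, α_i) and (C_i, γ_i). Then there exist a tower of abelian groups (B_i, β_i) and level morphisms s = (s_i : A_i → B_i) and t = (t_i : B_i → C_i) with t_i ∘ s_i = f_i for all i, such that each s_i is surjective (so each B_i is a quotient of A_i), the induced homomorphism lim_i A_i → lim_i B_i is surjective, the induced homomorphism lim_i B_i → lim_i C_i is injective, and the induced homomorphism lim¹_i A_i → lim¹_i B_i is an isomorphism. -/
/-- Lemma (level-factorization (a)): any level morphism `f : (A_i) → (C_i)` of towers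
of abelian groups factors through a tower `(B_i)` of quotient groups of the `A_i`
(i.e. with each `A_i → B_i` surjective) such that `lim A_i → lim B_i` is surjective,
`lim B_i → lim C_i` is injective, and `lim¹ A_i → lim¹ B_i` is an isomorphism.

Here `lim` is the group of threads and `lim¹` is the cokernel of
`d(g)_i = g_i − p_i(g_{i+1})`; the conditions on `lim¹` are expressed on
representatives: injectivity says that if the image of `a : ∏ A_i` lies in the range
of `d_B` then `a` lies in the range of `d_A`, and surjectivity says that every
`b : ∏ B_i` agrees with the image of some `a : ∏ A_i` modulo the range of `d_B`. -/
theorem stmt_6 (A C : ℕ → Type) [∀ i, AddCommGroup (A i)] [∀ i, AddCommGroup (C i)]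
    (α : ∀ i, A (i + 1) →+ A i) (γ : ∀ i, C (i + 1) →+ C i)
    (f : ∀ i, A i →+ C i)
    (hf : ∀ i a, f i (α i a) = γ i (f (i + 1) a)) :
    ∃ (B : ℕ → AddCommGrpCat) (β : ∀ i, ↥(B (i + 1)) →+ ↥(B i))
      (s : ∀ i, A i →+ ↥(B i)) (t : ∀ i, ↥(B i) →+ C i),
      (∀ i a, s i (α i a) = β i (s (i + 1) a)) ∧
      (∀ i b, t i (β i b) = γ i (t (i + 1) b)) ∧
      (∀ i a, t i (s i a) = f i a) ∧
      (∀ i, Function.Surjective (s i)) ∧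
      -- `lim A → lim B` is surjective
      (∀ b : ∀ i, ↥(B i), (∀ i, β i (b (i + 1)) = b i) →
        ∃ a : ∀ i, A i, (∀ i, α i (a (i + 1)) = a i) ∧ ∀ i, s i (a i) = b i) ∧
      -- `lim B → lim C` is injective
      (∀ b b' : ∀ i, ↥(B i), (∀ i, β i (b (i + 1)) = b i) →
        (∀ i, β i (b' (i + 1)) = b' i) → (∀ i, t i (b i) = t i (b' i)) → b = b') ∧
      -- `lim¹ A → lim¹ B` is injective
      (∀ a : ∀ i, A i, (∃ c : ∀ i, ↥(B i), ∀ i, s i (a i) = c i - β i (c (i + 1))) →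
        ∃ e : ∀ i, A i, ∀ i, a i = e i - α i (e (i + 1))) ∧
      -- `lim¹ A → lim¹ B` is surjective
      (∀ b : ∀ i, ↥(B i), ∃ a : ∀ i, A i, ∃ c : ∀ i, ↥(B i),
        ∀ i, s i (a i) - b i = c i - β i (c (i + 1))) := by
  classical
  -- K i : components of threads in the kernel of f
  let K : ∀ i, AddSubgroup (A i) := fun i =>
    { carrier := { a | ∃ x : ∀ j, A j,
        (∀ j, α j (x (j + 1)) = x j) ∧ (∀ j, f j (x j) = 0) ∧ x i = a }
      zero_mem' := ⟨fun _ => 0, fun j => by simp, fun j => by simp, rfl⟩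
      add_mem' := by
        intro a b ha hb
        obtain ⟨x, hx1, hx2, hx3⟩ := ha
        obtain ⟨y, hy1, hy2, hy3⟩ := hb
        exact ⟨fun j => x j + y j, fun j => by simp [hx1 j, hy1 j],
          fun j => by simp [hx2 j, hy2 j], by simp [hx3, hy3]⟩
      neg_mem' := by
        intro a ha
        obtain ⟨x, hx1, hx2, hx3⟩ := ha
        exact ⟨fun j => -x j, fun j => by simp [hx1 j], fun j => by simp [hx2 j],
          by simp [hx3]⟩ }
  have hKα : ∀ i (a : A (i + 1)), a ∈ K (i + 1) → α i a ∈ K i := by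
    rintro i a ⟨x, hx1, hx2, hx3⟩
    exact ⟨x, hx1, hx2, by rw [← hx1 i, hx3]⟩
  have hKsurj : ∀ i (a : A i), a ∈ K i → ∃ a', a' ∈ K (i + 1) ∧ α i a' = a := by
    rintro i a ⟨x, hx1, hx2, hx3⟩
    exact ⟨x (i + 1), ⟨x, hx1, hx2, rfl⟩, by rw [hx1 i, hx3]⟩
  have hKf : ∀ i (a : A i), a ∈ K i → f i a = 0 := by
    rintro i a ⟨x, _, hx2, hx3⟩
    rw [← hx3]; exact hx2 i
  have hthread : ∀ (x : ∀ j, A j), (∀ j, α j (x (j + 1)) = x j) →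
      (∀ j, f j (x j) = 0) → ∀ i, x i ∈ K i := fun x h1 h2 i => ⟨x, h1, h2, rfl⟩
  -- the quotient maps etc.
  let q : ∀ i, A i →+ A i ⧸ K i := fun i => QuotientAddGroup.mk' (K i)
  let βm : ∀ i, A (i + 1) ⧸ K (i + 1) →+ A i ⧸ K i := fun i =>
    QuotientAddGroup.map (K (i + 1)) (K i) (α i) (fun a ha => hKα i a ha)
  let tm : ∀ i, A i ⧸ K i →+ C i := fun i =>
    QuotientAddGroup.lift (K i) (f i) (fun a ha => hKf i a ha)
  have hq0 : ∀ i (a : A i), q i a = 0 ↔ a ∈ K i := fun i a =>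
    QuotientAddGroup.eq_zero_iff a
  have hcomm : ∀ i (a : A (i + 1)), q i (α i a) = βm i (q (i + 1) a) := fun i a => rfl
  have htq : ∀ i (a : A i), tm i (q i a) = f i a := fun i a => rfl
  have hqsurj : ∀ i, Function.Surjective (q i) := fun i =>
    QuotientAddGroup.mk'_surjective (K i)
  -- lim A → lim B surjective
  have lim_surj : ∀ b : ∀ i, A i ⧸ K i, (∀ i, βm i (b (i + 1)) = b i) →
      ∃ a : ∀ i, A i, (∀ i, α i (a (i + 1)) = a i) ∧ ∀ i, q i (a i) = b i := by
    intro b hb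
    have step : ∀ i (x : A i), q i x = b i →
        ∃ y : A (i + 1), (q (i + 1) y = b (i + 1) ∧ α i y = x) := by
      intro i x hx
      obtain ⟨y0, hy0⟩ := hqsurj (i + 1) (b (i + 1))
      have hk : α i y0 - x ∈ K i := by
        rw [← hq0]
        rw [map_sub, hx, hcomm, hy0, hb i, sub_self]
      obtain ⟨k, hk1, hk2⟩ := hKsurj i _ hk
      refine ⟨y0 - k, ?_, ?_⟩
      · rw [map_sub, hy0, (hq0 _ _).2 hk1, sub_zero]
      · rw [map_sub, hk2]; abel
    let F : ∀ i, { x : A i // q i x = b i } → { x : A (i + 1) // q (i + 1) x = b (i + 1) } :=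
      fun i x => ⟨(step i x.1 x.2).choose, (step i x.1 x.2).choose_spec.1⟩
    obtain ⟨a0, ha0⟩ := hqsurj 0 (b 0)
    let seq : ∀ i, { x : A i // q i x = b i } := fun i => Nat.rec ⟨a0, ha0⟩ F i
    refine ⟨fun i => (seq i).1, fun i => ?_, fun i => (seq i).2⟩
    exact (step i (seq i).1 (seq i).2).choose_spec.2
  -- solving d_A e = k for k in ∏ K i
  have solveK : ∀ k : ∀ i, A i, (∀ i, k i ∈ K i) →
      ∃ e : ∀ i, A i, ∀ i, k i = e i - α i (e (i + 1)) := by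
    intro k hk
    have step : ∀ i (x : A i), x ∈ K i →
        ∃ y : A (i + 1), (y ∈ K (i + 1) ∧ α i y = x - k i) := by
      intro i x hx
      obtain ⟨y, hy1, hy2⟩ := hKsurj i (x - k i) (sub_mem hx (hk i))
      exact ⟨y, hy1, hy2⟩
    let F : ∀ i, { x : A i // x ∈ K i } → { x : A (i + 1) // x ∈ K (i + 1) } :=
      fun i x => ⟨(step i x.1 x.2).choose, (step i x.1 x.2).choose_spec.1⟩
    let seq : ∀ i, { x : A i // x ∈ K i } := fun i => Nat.rec ⟨0, zero_mem _⟩ F i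
    refine ⟨fun i => (seq i).1, fun i => ?_⟩
    have := (step i (seq i).1 (seq i).2).choose_spec.2
    rw [show α i (seq (i+1)).1 = (seq i).1 - k i from this]
    abel
  -- wrap in ULift to match the (polymorphic) universe of AddCommGrp
  let B : ℕ → AddCommGrpCat := fun i => AddCommGrpCat.of (ULift (A i ⧸ K i))
  let up : ∀ i, (A i ⧸ K i) →+ ↥(B i) := fun i =>
    (AddEquiv.ulift.symm : (A i ⧸ K i) ≃+ ULift (A i ⧸ K i)).toAddMonoidHom
  let dn : ∀ i, ↥(B i) →+ (A i ⧸ K i) := fun i =>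
    (AddEquiv.ulift : ULift (A i ⧸ K i) ≃+ (A i ⧸ K i)).toAddMonoidHom
  have hud : ∀ i (x : A i ⧸ K i), dn i (up i x) = x := fun i x => rfl
  have hdu : ∀ i (x : ↥(B i)), up i (dn i x) = x := fun i x => rfl
  have dn_sub : ∀ i (x y : ↥(B i)), dn i (x - y) = dn i x - dn i y :=
    fun i x y => map_sub (dn i) x y
  let s : ∀ i, A i →+ ↥(B i) := fun i => (up i).comp (q i)
  let β : ∀ i, ↥(B (i + 1)) →+ ↥(B i) := fun i => (up i).comp ((βm i).comp (dn (i + 1)))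
  let t : ∀ i, ↥(B i) →+ C i := fun i => (tm i).comp (dn i)
  have hsdef : ∀ i (a : A i), s i a = up i (q i a) := fun i a => rfl
  have hβdef : ∀ i (b : ↥(B (i + 1))), β i b = up i (βm i (dn (i + 1) b)) := fun i b => rfl
  have htdef : ∀ i (b : ↥(B i)), t i b = tm i (dn i b) := fun i b => rfl
  refine ⟨B, β, s, t, ?_, ?_, ?_, ?_, ?_, ?_, ?_, ?_⟩
  · -- s commutes
    intro i a
    rw [hsdef, hβdef, hsdef, hud, hcomm]
  · -- t commutes
    intro i b
    rw [htdef, hβdef, hud, htdef]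
    obtain ⟨a, ha⟩ := hqsurj (i + 1) (dn (i + 1) b)
    rw [← ha, ← hcomm, htq, htq]
    exact hf i a
  · -- t ∘ s = f
    intro i a
    rw [htdef, hsdef, hud, htq]
  · -- s surjective
    intro i b
    obtain ⟨a, ha⟩ := hqsurj i (dn i b)
    exact ⟨a, by rw [hsdef, ha, hdu]⟩
  · -- lim A → lim B surjective
    intro b hb
    have hb' : ∀ i, βm i (dn (i + 1) (b (i + 1))) = dn i (b i) := by
      intro i
      have h : dn i (β i (b (i + 1))) = dn i (b i) := by rw [hb i]
      rw [hβdef, hud] at h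
      exact h
    obtain ⟨a, ha1, ha2⟩ := lim_surj (fun i => dn i (b i)) hb'
    exact ⟨a, ha1, fun i => by rw [hsdef, ha2, hdu]⟩
  · -- lim B → lim C injective
    intro b b' hb hb' hbb
    have hd : ∀ i, βm i (dn (i + 1) (b (i + 1))) = dn i (b i) := by
      intro i
      have h : dn i (β i (b (i + 1))) = dn i (b i) := by rw [hb i]
      rw [hβdef, hud] at h
      exact h
    have hd' : ∀ i, βm i (dn (i + 1) (b' (i + 1))) = dn i (b' i) := by
      intro i
      have h : dn i (β i (b' (i + 1))) = dn i (b' i) := by rw [hb' i]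
      rw [hβdef, hud] at h
      exact h
    obtain ⟨a, ha1, ha2⟩ := lim_surj (fun i => dn i (b i) - dn i (b' i)) (fun i => by
      show βm i (dn (i + 1) (b (i + 1)) - dn (i + 1) (b' (i + 1)))
        = dn i (b i) - dn i (b' i)
      rw [map_sub, hd i, hd' i])
    have hmem : ∀ i, a i ∈ K i := by
      refine hthread a ha1 fun j => ?_
      have h : tm j (dn j (b j)) = tm j (dn j (b' j)) := by
        have h2 := hbb j
        rw [htdef, htdef] at h2
        exact h2
      rw [← htq, ha2, map_sub, sub_eq_zero]
      exact h
    funext i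
    have h0 := (hq0 i (a i)).2 (hmem i)
    rw [ha2 i] at h0
    have h1 : dn i (b i) = dn i (b' i) := sub_eq_zero.mp h0
    have h2 : up i (dn i (b i)) = up i (dn i (b' i)) := by rw [h1]
    rw [hdu, hdu] at h2
    exact h2
  · -- lim¹ injective
    rintro a ⟨c, hc⟩
    have hc' : ∀ i, q i (a i) = dn i (c i) - βm i (dn (i + 1) (c (i + 1))) := by
      intro i
      have h : dn i (s i (a i)) = dn i (c i - β i (c (i + 1))) := by rw [hc i]
      rw [hsdef, hud, dn_sub, hβdef, hud] at h
      exact h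
    choose x hx using fun i => hqsurj i (dn i (c i))
    have hk : ∀ i, a i - x i + α i (x (i + 1)) ∈ K i := by
      intro i
      rw [← hq0, map_add, map_sub, hc' i, hx i, hcomm, hx (i + 1)]
      abel
    obtain ⟨e, he⟩ := solveK _ hk
    refine ⟨fun i => x i + e i, fun i => ?_⟩
    rw [map_add]
    have h2 : a i = (a i - x i + α i (x (i + 1))) + x i - α i (x (i + 1)) := by abel
    rw [h2, he i]
    dsimp only; abel
  · -- lim¹ surjective
    intro b
    choose a ha using fun i => hqsurj i (dn i (b i))
    refine ⟨a, 0, fun i => ?_⟩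
    have h : s i (a i) = b i := by rw [hsdef, ha i, hdu]
    rw [h, sub_self]
    simp
end

section
/- Let f = (f_i : A_i → C_i) be a level morphism between towers of abelian groups (A_i, α_i) and (C_i, γ_i). Then there exist a tower of abelian groups (B_i, β_i) and level morphisms s = (s_i : A_i → B_i) and t = (t_i : B_i → C_i) with t_i ∘ s_i = f_i for all i, such that each t_i is injective (so each B_i is a subgroup of C_i), the induced homomorphism lim¹_i A_i → lim¹_i B_i is surjective, the induced homomorphism lim¹_i B_i → lim¹_i C_i is injective, and the induced homomorphism lim_i B_i → lim_i C_i is an isomorphism. -/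
section Aux

variable {A C : ℕ → Type} [∀ i, AddCommGroup (A i)] [∀ i, AddCommGroup (C i)]
variable (γ : ∀ i, C (i + 1) →+ C i) (f : ∀ i, A i →+ C i)

/-- The subgroup of `C i` of elements extending to a sequence whose successive
differences lie in the image of `f`. -/
def Bsub (i : ℕ) : AddSubgroup (C i) where
  carrier := {x | ∃ u : ∀ j, C j, u i = x ∧
    ∀ j, i ≤ j → ∃ a : A j, u j - γ j (u (j + 1)) = f j a}
  zero_mem' := ⟨fun _ => 0, rfl, fun j _ => ⟨0, by simp⟩⟩
  add_mem' := by
    rintro x y ⟨u, hu, hgu⟩ ⟨v, hv, hgv⟩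
    refine ⟨u + v, by simp [hu, hv], fun j hj => ?_⟩
    obtain ⟨a, ha⟩ := hgu j hj
    obtain ⟨b, hb⟩ := hgv j hj
    exact ⟨a + b, by simp only [Pi.add_apply, map_add]; rw [← ha, ← hb]; abel⟩
  neg_mem' := by
    rintro x ⟨u, hu, hgu⟩
    refine ⟨-u, by simp [hu], fun j hj => ?_⟩
    obtain ⟨a, ha⟩ := hgu j hj
    exact ⟨-a, by simp only [Pi.neg_apply, map_neg]; rw [← ha]; abel⟩

theorem Bsub_stable (i : ℕ) {x : C (i + 1)} (hx : x ∈ Bsub γ f (i + 1)) :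
    γ i x ∈ Bsub γ f i := by
  obtain ⟨u, hu, hgu⟩ := hx
  refine ⟨Function.update u i (γ i (u (i + 1))), by simp [hu], fun j hj => ?_⟩
  rcases eq_or_lt_of_le hj with rfl | hj'
  · refine ⟨0, ?_⟩
    rw [Function.update_self, Function.update_of_ne (by omega)]
    simp
  · rw [Function.update_of_ne (by omega), Function.update_of_ne (by omega)]
    exact hgu j hj'

theorem f_mem_Bsub (i : ℕ) (a : A i) : f i a ∈ Bsub γ f i := by
  refine ⟨fun j => if h : j = i then h ▸ f i a else 0, by simp, fun j hj => ?_⟩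
  rcases eq_or_lt_of_le hj with rfl | hj'
  · exact ⟨a, by simp [show ¬ (i + 1 = i) by omega]⟩
  · exact ⟨0, by simp [show ¬ (j = i) by omega, show ¬ (j + 1 = i) by omega]⟩

end Aux


/-- Lemma (level-factorization (b)): any level morphism `f : (A_i) → (C_i)` of towers
of abelian groups factors through a tower `(B_i)` of subgroups of the `C_i`
(i.e. with each `B_i → C_i` injective) such that `lim¹ A_i → lim¹ B_i` is surjective,
`lim¹ B_i → lim¹ C_i` is injective, and `lim B_i → lim C_i` is an isomorphism.

Here `lim` is the group of threads and `lim¹` is the cokernel of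
`d(g)_i = g_i − p_i(g_{i+1})`; the conditions on `lim¹` are expressed on
representatives: surjectivity of `lim¹ A → lim¹ B` says that every `b : ∏ B_i` agrees
with the image of some `a : ∏ A_i` modulo the range of `d_B`, and injectivity of
`lim¹ B → lim¹ C` says that if the image of `b : ∏ B_i` lies in the range of `d_C`
then `b` lies in the range of `d_B`. -/
theorem stmt_7 (A C : ℕ → Type) [∀ i, AddCommGroup (A i)] [∀ i, AddCommGroup (C i)]
    (α : ∀ i, A (i + 1) →+ A i) (γ : ∀ i, C (i + 1) →+ C i)
    (f : ∀ i, A i →+ C i)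
    (hf : ∀ i a, f i (α i a) = γ i (f (i + 1) a)) :
    ∃ (B : ℕ → AddCommGrpCat) (β : ∀ i, ↥(B (i + 1)) →+ ↥(B i))
      (s : ∀ i, A i →+ ↥(B i)) (t : ∀ i, ↥(B i) →+ C i),
      (∀ i a, s i (α i a) = β i (s (i + 1) a)) ∧
      (∀ i b, t i (β i b) = γ i (t (i + 1) b)) ∧
      (∀ i a, t i (s i a) = f i a) ∧
      (∀ i, Function.Injective (t i)) ∧
      -- `lim¹ A → lim¹ B` is surjective
      (∀ b : ∀ i, ↥(B i), ∃ a : ∀ i, A i, ∃ c : ∀ i, ↥(B i),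
        ∀ i, s i (a i) - b i = c i - β i (c (i + 1))) ∧
      -- `lim¹ B → lim¹ C` is injective
      (∀ b : ∀ i, ↥(B i), (∃ c : ∀ i, C i, ∀ i, t i (b i) = c i - γ i (c (i + 1))) →
        ∃ e : ∀ i, ↥(B i), ∀ i, b i = e i - β i (e (i + 1))) ∧
      -- `lim B → lim C` is injective
      (∀ b b' : ∀ i, ↥(B i), (∀ i, β i (b (i + 1)) = b i) →
        (∀ i, β i (b' (i + 1)) = b' i) → (∀ i, t i (b i) = t i (b' i)) → b = b') ∧
      -- `lim B → lim C` is surjective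
      (∀ c : ∀ i, C i, (∀ i, γ i (c (i + 1)) = c i) →
        ∃ b : ∀ i, ↥(B i), (∀ i, β i (b (i + 1)) = b i) ∧ ∀ i, t i (b i) = c i) := by
  classical
  refine ⟨fun i => AddCommGrpCat.of (ULift (↥(Bsub γ f i))),
    fun i => { toFun := fun x => ULift.up (⟨γ i x.down.1, Bsub_stable γ f i x.down.2⟩ :
                 Bsub γ f i)
               map_zero' := congrArg ULift.up (Subtype.ext (map_zero (γ i)))
               map_add' := fun x y =>
                 congrArg ULift.up (Subtype.ext (map_add (γ i) x.down.1 y.down.1)) },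
    fun i => { toFun := fun a => ULift.up (⟨f i a, f_mem_Bsub γ f i a⟩ : Bsub γ f i)
               map_zero' := congrArg ULift.up (Subtype.ext (map_zero (f i)))
               map_add' := fun x y => congrArg ULift.up (Subtype.ext (map_add (f i) x y)) },
    fun i => (AddSubgroup.subtype (Bsub γ f i)).comp
      { toFun := ULift.down, map_zero' := rfl, map_add' := fun _ _ => rfl },
    fun i a => congrArg ULift.up (Subtype.ext (hf i a)),
    fun i b => rfl,
    fun i a => rfl,
    fun i => fun x y h => ULift.down_injective (Subtype.ext h),
    ?_, ?_, ?_, ?_⟩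
  · -- lim¹ A → lim¹ B surjective
    intro b
    choose U hU hY' using fun i => (b i).down.2
    choose Y hY using hY'
    have key : ∀ (S : Finset ℕ) (k : ℕ) (hS : ∀ j ∈ S, j ≤ k),
        ∃ a : A k, (∑ j ∈ S, U j k) - γ k (∑ j ∈ S, U j (k + 1)) = f k a := by
      intro S k hS
      refine ⟨∑ j ∈ S.attach, Y j.1 k (hS j.1 j.2), ?_⟩
      rw [map_sum, map_sum, ← Finset.sum_sub_distrib,
        ← Finset.sum_attach S (fun j => U j k - γ k (U j (k + 1)))]
      exact Finset.sum_congr rfl fun j _ => hY j.1 k (hS j.1 j.2)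
    choose ya hya using fun i =>
      key (Finset.range i) i (fun j hj => (Finset.mem_range.mp hj).le)
    have EmemB : ∀ i, (∑ j ∈ Finset.range i, U j i) ∈ Bsub γ f i := fun i =>
      ⟨fun k => ∑ j ∈ Finset.range i, U j k, rfl, fun k hk =>
        key (Finset.range i) k (fun j hj => (Finset.mem_range.mp hj).le.trans hk)⟩
    refine ⟨fun i => ya i + Y i i le_rfl,
      fun i => ULift.up ⟨∑ j ∈ Finset.range i, U j i, EmemB i⟩, fun i => ?_⟩
    refine ULift.down_injective (Subtype.ext ?_)
    show f i (ya i + Y i i le_rfl) - (b i).down.1 =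
      (∑ j ∈ Finset.range i, U j i) - γ i (∑ j ∈ Finset.range (i + 1), U j (i + 1))
    have h2 : γ i (U i (i + 1)) = (b i).down.1 - f i (Y i i le_rfl) := by
      have h := hY i i le_rfl
      rw [hU i] at h
      rw [← h]; abel
    rw [map_add (f i), Finset.sum_range_succ (fun j => U j (i + 1)) i, map_add (γ i),
      h2, ← hya i]
    abel
  · -- lim¹ B → lim¹ C injective
    rintro b ⟨c, hc⟩
    choose U hU hY' using fun i => (b i).down.2
    choose Y hY using hY'
    have key : ∀ (S : Finset ℕ) (k : ℕ) (hS : ∀ j ∈ S, j ≤ k),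
        ∃ a : A k, (∑ j ∈ S, U j k) - γ k (∑ j ∈ S, U j (k + 1)) = f k a := by
      intro S k hS
      refine ⟨∑ j ∈ S.attach, Y j.1 k (hS j.1 j.2), ?_⟩
      rw [map_sum, map_sum, ← Finset.sum_sub_distrib,
        ← Finset.sum_attach S (fun j => U j k - γ k (U j (k + 1)))]
      exact Finset.sum_congr rfl fun j _ => hY j.1 k (hS j.1 j.2)
    have mem : ∀ i, c i ∈ Bsub γ f i := by
      intro i
      refine ⟨fun k => c k + ∑ j ∈ Finset.Ico i k, U j k, by simp, fun k hk => ?_⟩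
      obtain ⟨v, hv⟩ := key (Finset.Ico i k) k (fun j hj => (Finset.mem_Ico.mp hj).2.le)
      refine ⟨v + Y k k le_rfl, ?_⟩
      have h2 : γ k (U k (k + 1)) = (b k).down.1 - f k (Y k k le_rfl) := by
        have h := hY k k le_rfl
        rw [hU k] at h
        rw [← h]; abel
      show c k + ∑ j ∈ Finset.Ico i k, U j k -
        γ k (c (k + 1) + ∑ j ∈ Finset.Ico i (k + 1), U j (k + 1)) = f k (v + Y k k le_rfl)
      have hck : ((b k).down : C k) = c k - γ k (c (k + 1)) := hc k
      rw [Finset.sum_Ico_succ_top hk (fun j => U j (k + 1)), map_add (γ k), map_add (γ k),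
        h2, hck, map_add (f k), ← hv]
      abel
    exact ⟨fun i => ULift.up ⟨c i, mem i⟩,
      fun i => ULift.down_injective (Subtype.ext (hc i))⟩
  · -- lim B → lim C injective
    intro b b' _ _ h
    funext i
    exact ULift.down_injective (Subtype.ext (h i))
  · -- lim B → lim C surjective
    intro c hc
    exact ⟨fun i => ULift.up ⟨c i, ⟨c, rfl, fun j _ => ⟨0, by simp [hc j]⟩⟩⟩,
      fun i => ULift.down_injective (Subtype.ext (hc i)), fun i => rfl⟩
end

section
/- Let f = (f_i : A_i → C_i) be a level morphism between towers of (not necessarily abelian) groups (A_i, α_i) and (C_i, γ_i), and suppose the tower (A_i) satisfies the Mittag-Leffler condition: for each i there exists j ≥ i such that the image of the composite bonding homomorphism A_k → A_i equals the image of A_j → A_i for all k ≥ j. Then there exist a tower of groups (B_i, β_i) and level morphisms s = (s_i : A_i → B_i) and t = (t_i : B_i → C_i) with t_i ∘ s_i = f_i for all i, such that each s_i is surjective (so each B_i is a quotient group of A_i), the induced map lim_i A_i → lim_i B_i is surjective, the induced map lim_i B_i → lim_i C_i is injective, and lim¹_i B_i is trivial (i.e. the action of ∏_i B_i on itself given by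 (h · g)_i = h_i · g_i · β_i(h_{i+1})⁻¹ is transitive). -/
/-- The composite bonding homomorphism `A_{i+m} → A_i` of a tower of groups
(the identity when `m = 0`). -/
def aDown (A : ℕ → Type) [∀ i, Group (A i)] (α : ∀ i, A (i + 1) →* A i) :
    ∀ (m i : ℕ), A (i + m) →* A i
  | 0, _ => MonoidHom.id _
  | m + 1, i => (aDown A α m i).comp (α (i + m))

/-- plain-function composite of a tower of maps -/
def tDown {X : ℕ → Type} (δ : ∀ i, X (i + 1) → X i) : ∀ (m i : ℕ), X (i + m) → X i
  | 0, _, x => x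
  | m + 1, i, x => tDown δ m i (δ (i + m) x)

theorem cast_apply {X Y : ℕ → Type} (F : ∀ n, X n → Y n) {p q : ℕ} (h : p = q)
    (h2 : X p = X q) (x : X p) : F q (cast h2 x) = cast (congrArg Y h) (F p x) := by
  subst h; rfl

theorem cast_pred {X : ℕ → Type} (P : ∀ n, X n → Prop) {p q : ℕ} (h : p = q)
    (h2 : X p = X q) (x : X p) (hx : P p x) : P q (cast h2 x) := by
  subst h; exact hx

theorem tDown_cast {X : ℕ → Type} (δ : ∀ i, X (i + 1) → X i) {m m' : ℕ} (i : ℕ)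
    (h : m = m') (h2 : X (i + m) = X (i + m')) (x : X (i + m)) :
    tDown δ m' i (cast h2 x) = tDown δ m i x := by
  subst h; rfl

theorem tDown_peel {X : ℕ → Type} (δ : ∀ i, X (i + 1) → X i) :
    ∀ (m i : ℕ) (x : X (i + (m + 1))),
    tDown δ (m + 1) i x
      = δ i (tDown δ m (i + 1) (cast (congrArg X (by omega : i + (m+1) = (i+1) + m)) x))
  | 0, i, x => rfl
  | m + 1, i, x => by
    show tDown δ (m+1) i (δ (i + (m+1)) x) = _
    rw [tDown_peel δ m i (δ (i + (m+1)) x)]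
    have hc := cast_apply (X := fun n => X (n+1)) (Y := X) (fun n => δ n)
      (show i + (m+1) = (i+1) + m by omega)
      (congrArg (fun n => X (n+1)) (show i + (m+1) = (i+1) + m by omega)) x
    -- hc : δ ((i+1)+m) (cast _ x) = cast _ (δ (i+(m+1)) x)
    rw [← hc]
    rfl

theorem tDown_comp {X : ℕ → Type} (δ : ∀ i, X (i + 1) → X i) :
    ∀ (r m i : ℕ) (x : X ((i + m) + r)),
    tDown δ (m + r) i (cast (congrArg X (Nat.add_assoc i m r)) x)
      = tDown δ m i (tDown δ r (i + m) x)
  | 0, m, i, x => rfl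
  | r + 1, m, i, x => by
    show tDown δ ((m + r) + 1) i _ = _
    show tDown δ (m+r) i (δ (i + (m+r)) (cast _ x)) = _
    have hc := cast_apply (X := fun n => X (n+1)) (Y := X) (fun n => δ n)
      (show (i + m) + r = i + (m + r) by omega)
      (congrArg (fun n => X (n+1)) (show (i+m) + r = i + (m+r) by omega)) x
    rw [show (cast (congrArg X (Nat.add_assoc i m (r+1))) x : X ((i + (m+r)) + 1))
        = cast (congrArg (fun n => X (n+1)) (show (i+m)+r = i+(m+r) by omega)) x from rfl]
    rw [hc, tDown_comp δ r m i (δ ((i+m)+r) x)]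
    rfl

theorem tDown_thread {X : ℕ → Type} (δ : ∀ i, X (i + 1) → X i) (y : ∀ k, X k) {i : ℕ}
    (hy : ∀ k, i ≤ k → δ k (y (k + 1)) = y k) :
    ∀ m, tDown δ m i (y (i + m)) = y i
  | 0 => rfl
  | m + 1 => by
    show tDown δ m i (δ (i+m) (y ((i+m)+1))) = y i
    rw [hy (i + m) (by omega)]
    exact tDown_thread δ y hy m

theorem aDown_eq_tDown (A : ℕ → Type) [∀ i, Group (A i)] (α : ∀ i, A (i + 1) →* A i) :
    ∀ (m i : ℕ) (x : A (i + m)), aDown A α m i x = tDown (fun k => ⇑(α k)) m i x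
  | 0, _, _ => rfl
  | m + 1, i, x => aDown_eq_tDown A α m i (α (i + m) x)

/-- build a thread through a system of nonempty sets closed under lifting -/
theorem buildThread {X : ℕ → Type} (x0 : ∀ k, X k) (F : ∀ k, X (k + 1) → X k)
    (D : ∀ k, Set (X k)) (h0 : (D 0).Nonempty)
    (hstep : ∀ k x, x ∈ D k → ∃ x', x' ∈ D (k + 1) ∧ F k x' = x) :
    ∃ Y : ∀ k, X k, (∀ k, Y k ∈ D k) ∧ ∀ k, F k (Y (k + 1)) = Y k := by
  classical
  set pick : ∀ k, X k → X (k + 1) := fun k x =>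
    if h : x ∈ D k then (hstep k x h).choose else x0 (k + 1) with hpick
  set Y : ∀ k, X k := fun k => Nat.rec h0.choose (fun k y => pick k y) k with hY
  have hmem : ∀ k, Y k ∈ D k := by
    intro k; induction k with
    | zero => exact h0.choose_spec
    | succ k ih =>
      show pick k (Y k) ∈ D (k + 1)
      rw [hpick]; simp only [dif_pos ih]
      exact (hstep k (Y k) ih).choose_spec.1
  refine ⟨Y, hmem, fun k => ?_⟩
  show F k (pick k (Y k)) = Y k
  rw [hpick]; simp only [dif_pos (hmem k)]
  exact (hstep k (Y k) (hmem k)).choose_spec.2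

section gen
variable (A C : ℕ → Type) [∀ i, Group (A i)] [∀ i, Group (C i)]
  (α : ∀ i, A (i + 1) →* A i) (γ : ∀ i, C (i + 1) →* C i) (f : ∀ i, A i →* C i)

/-- elements extendable to a kernel thread above level `i` -/
def Mgrp (i : ℕ) : Subgroup (A i) where
  carrier := {x | ∃ y : ∀ k, A k, y i = x ∧ (∀ k, i ≤ k → α k (y (k + 1)) = y k) ∧
    ∀ k, i ≤ k → f k (y k) = 1}
  one_mem' := ⟨fun _ => 1, rfl, fun k _ => by simp, fun k _ => by simp⟩
  mul_mem' := by
    rintro a b ⟨y, hy1, hy2, hy3⟩ ⟨z, hz1, hz2, hz3⟩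
    exact ⟨fun k => y k * z k, by show y i * z i = a * b; rw [hy1, hz1],
      fun k hk => by rw [map_mul, hy2 k hk, hz2 k hk],
      fun k hk => by rw [map_mul, hy3 k hk, hz3 k hk, one_mul]⟩
  inv_mem' := by
    rintro a ⟨y, hy1, hy2, hy3⟩
    exact ⟨fun k => (y k)⁻¹, by show (y i)⁻¹ = a⁻¹; rw [hy1],
      fun k hk => by rw [map_inv, hy2 k hk],
      fun k hk => by rw [map_inv, hy3 k hk, inv_one]⟩

variable (hf : ∀ i a, f i (α i a) = γ i (f (i + 1) a))

theorem m1 (i : ℕ) : Mgrp A C α f i ≤ (f i).ker := by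
  rintro x ⟨y, hy1, hy2, hy3⟩
  rw [MonoidHom.mem_ker, ← hy1]
  exact hy3 i le_rfl

include hf in
theorem m2a (i : ℕ) (x : A (i + 1)) (hx : x ∈ Mgrp A C α f (i + 1)) :
    α i x ∈ Mgrp A C α f i := by
  classical
  obtain ⟨y, hy1, hy2, hy3⟩ := hx
  refine ⟨Function.update y i (α i x), Function.update_self _ _ _, ?_, ?_⟩
  · intro k hk
    rcases eq_or_lt_of_le hk with h | h
    · subst h
      rw [Function.update_of_ne (by omega), Function.update_self, hy1]
    · rw [Function.update_of_ne (by omega), Function.update_of_ne (by omega)]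
      exact hy2 k (by omega)
  · intro k hk
    rcases eq_or_lt_of_le hk with h | h
    · subst h
      rw [Function.update_self, hf i x, ← hy1, hy3 (i + 1) le_rfl, map_one]
    · rw [Function.update_of_ne (by omega)]
      exact hy3 k (by omega)

include hf in
theorem m2it : ∀ (m i : ℕ) (x : A (i + m)), x ∈ Mgrp A C α f (i + m) →
    aDown A α m i x ∈ Mgrp A C α f i
  | 0, _, _, hx => hx
  | m + 1, i, x, hx =>
    m2it m i (α (i + m) x) (m2a A C α γ f hf (i + m) x hx)

theorem m_shift (i m : ℕ) (x : A i) (hx : x ∈ Mgrp A C α f i) :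
    ∃ y : ∀ k, A k, y i = x ∧ (∀ k, i ≤ k → α k (y (k + 1)) = y k) ∧
      (∀ k, i ≤ k → f k (y k) = 1) ∧ y (i + m) ∈ Mgrp A C α f (i + m) := by
  obtain ⟨y, hy1, hy2, hy3⟩ := hx
  exact ⟨y, hy1, hy2, hy3, ⟨y, rfl, fun k hk => hy2 k (by omega),
    fun k hk => hy3 k (by omega)⟩⟩

end gen

section ml
variable (A C : ℕ → Type) [∀ i, Group (A i)] [∀ i, Group (C i)]
  (α : ∀ i, A (i + 1) →* A i) (γ : ∀ i, C (i + 1) →* C i) (f : ∀ i, A i →* C i)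
  (j : ℕ → ℕ) (hj : ∀ i, i ≤ j i)
  (hspec : ∀ i k, j i ≤ k →
    (aDown A α (k - i) i).range = (aDown A α (j i - i) i).range)

/-- the stable image subgroup -/
def Sgrp (i : ℕ) : Subgroup (A i) := (aDown A α (j i - i) i).range

include hspec in
theorem S_eq' (i m : ℕ) (h : j i ≤ i + m) :
    (aDown A α m i).range = Sgrp A α j i := by
  have h2 := hspec i (i + m) h
  rwa [Nat.add_sub_cancel_left] at h2

theorem aDown_peel (m i : ℕ) (x : A (i + (m + 1))) :
    aDown A α (m + 1) i x
      = α i (aDown A α m (i + 1) (cast (congrArg A (by omega : i + (m+1) = (i+1) + m)) x)) := by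
  rw [aDown_eq_tDown, aDown_eq_tDown]
  exact tDown_peel (fun k => ⇑(α k)) m i x

include hj hspec in
theorem L_surj (i : ℕ) (v : A i) (hv : v ∈ Sgrp A α j i) :
    ∃ w, w ∈ Sgrp A α j (i + 1) ∧ α i w = v := by
  set k := max (j i) (j (i + 1)) with hk
  have hik : i + 1 ≤ k := le_trans (hj (i + 1)) (le_max_right _ _)
  set m := k - (i + 1) with hm
  have hmk : (i + 1) + m = k := by omega
  have hv2 : v ∈ (aDown A α (m + 1) i).range := by
    rw [S_eq' A α j hspec i (m + 1) (by omega)] ; exact hv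
  obtain ⟨a, ha⟩ := hv2
  rw [aDown_peel] at ha
  refine ⟨aDown A α m (i + 1) (cast (congrArg A (by omega : i + (m+1) = (i+1) + m)) a), ?_, ha⟩
  rw [← S_eq' A α j hspec (i + 1) m (by omega)]
  exact ⟨_, rfl⟩

include hj hspec in
theorem L_thread (i : ℕ) (u : A i) (hu : u ∈ Sgrp A α j i) :
    ∃ Y : ∀ k, A k, Y i = u ∧ (∀ k, i ≤ k → α k (Y (k + 1)) = Y k) := by
  classical
  set pick : ∀ k, A k → A (k + 1) := fun k v =>
    if h : ∃ w, w ∈ Sgrp A α j (k + 1) ∧ α k w = v then h.choose else 1 with hpickdef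
  have hpick : ∀ k v, v ∈ Sgrp A α j k → pick k v ∈ Sgrp A α j (k + 1) ∧ α k (pick k v) = v := by
    intro k v hv
    have hex := L_surj A α j hj hspec k v hv
    rw [hpickdef]; simp only [dif_pos hex]
    exact hex.choose_spec
  have hWS : ∀ k (h : i ≤ k), Nat.leRecOn h (fun {k} v => pick k v) u ∈ Sgrp A α j k := by
    intro k h
    induction k, h using Nat.le_induction with
    | base => rw [Nat.leRecOn_self]; exact hu
    | succ k h ih =>
      rw [Nat.leRecOn_succ h]
      exact (hpick k _ ih).1
  refine ⟨fun k => if h : i ≤ k then Nat.leRecOn h (fun {k} v => pick k v) u else 1, ?_, ?_⟩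
  · simp only [dif_pos le_rfl]
    exact Nat.leRecOn_self u
  · intro k hk
    simp only [dif_pos hk, dif_pos (le_trans hk (Nat.le_succ k))]
    rw [Nat.leRecOn_succ hk]
    exact (hpick k _ (hWS k hk)).2

include hj hspec in
theorem C1 (i : ℕ) (u : A i) (hu : u ∈ Sgrp A α j i) (x : A i)
    (hx : x ∈ Mgrp A C α f i) : u * x * u⁻¹ ∈ Mgrp A C α f i := by
  obtain ⟨Y, hY1, hY2⟩ := L_thread A α j hj hspec i u hu
  obtain ⟨y, hy1, hy2, hy3⟩ := hx
  refine ⟨fun k => Y k * y k * (Y k)⁻¹, by show Y i * y i * (Y i)⁻¹ = u * x * u⁻¹; rw [hy1, hY1], ?_, ?_⟩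
  · intro k hk
    show α k (Y (k+1) * y (k+1) * (Y (k+1))⁻¹) = _
    rw [map_mul, map_mul, map_inv, hY2 k hk, hy2 k hk]
  · intro k hk
    show f k (Y k * y k * (Y k)⁻¹) = 1
    rw [map_mul, map_mul, map_inv, hy3 k hk, mul_one, mul_inv_cancel]

/-- the normal closure -/
def Ngrp (i : ℕ) : Subgroup (A i) := Subgroup.normalClosure (Mgrp A C α f i : Set (A i))

instance NgrpNormal (i : ℕ) : (Ngrp A C α f i).Normal := Subgroup.normalClosure_normal

theorem n1 (i : ℕ) : Ngrp A C α f i ≤ (f i).ker :=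
  Subgroup.normalClosure_le_normal (m1 A C α f i)

variable (hf : ∀ i a, f i (α i a) = γ i (f (i + 1) a))

include hf in
theorem n2 (i : ℕ) : Ngrp A C α f (i + 1) ≤ Subgroup.comap (α i) (Ngrp A C α f i) := by
  haveI : ((Ngrp A C α f i).comap (α i)).Normal := Subgroup.Normal.comap (NgrpNormal A C α f i) (α i)
  refine Subgroup.normalClosure_le_normal ?_
  intro x hx
  exact Subgroup.subset_normalClosure (m2a A C α γ f hf i x hx)

include hf hj hspec in
theorem n3le (i m : ℕ) (h : j i ≤ i + m) :
    Subgroup.map (aDown A α m i) (Ngrp A C α f (i + m)) ≤ Mgrp A C α f i := by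
  show Subgroup.map (aDown A α m i)
    (Subgroup.closure (Group.conjugatesOfSet (Mgrp A C α f (i + m) : Set (A (i + m))))) ≤ _
  rw [MonoidHom.map_closure]
  rw [Subgroup.closure_le]
  rintro _ ⟨c, hc, rfl⟩
  rw [Group.mem_conjugatesOfSet_iff] at hc
  obtain ⟨a, ha, hconj⟩ := hc
  obtain ⟨g, hg⟩ := isConj_iff.mp hconj
  subst hg
  rw [map_mul, map_mul, map_inv]
  refine C1 A C α f j hj hspec i _ ?_ _ (m2it A C α γ f hf m i a ha)
  rw [← S_eq' A α j hspec i m h]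
  exact ⟨_, rfl⟩

theorem n3ge (i m : ℕ) :
    Mgrp A C α f i ≤ Subgroup.map (aDown A α m i) (Ngrp A C α f (i + m)) := by
  intro x hx
  obtain ⟨y, hy1, hy2, hy3, hym⟩ := m_shift A C α f i m x hx
  refine ⟨y (i + m), Subgroup.subset_normalClosure hym, ?_⟩
  rw [aDown_eq_tDown]
  rw [tDown_thread (fun k => ⇑(α k)) y hy2 m]
  exact hy1

end ml


/-- Lemma (non-abelian factorization): a level morphism `f : (A_i) → (C_i)` of towers
of groups, with `(A_i)` satisfying the Mittag-Leffler condition, factors through a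
tower `(B_i)` of quotient groups of the `A_i` such that `lim A_i → lim B_i` is
surjective, `lim B_i → lim C_i` is injective, and `lim¹ B_i` is trivial (the standard
action of `∏ B_i` on itself is transitive).  The image of `A_k → A_i` for `k ≥ i` is
the range of `aDown A α (k - i) i` (note `i + (k - i) = k`). -/
theorem stmt_8 (A C : ℕ → Type) [∀ i, Group (A i)] [∀ i, Group (C i)]
    (α : ∀ i, A (i + 1) →* A i) (γ : ∀ i, C (i + 1) →* C i)
    (f : ∀ i, A i →* C i)
    (hf : ∀ i a, f i (α i a) = γ i (f (i + 1) a))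
    (hML : ∀ i, ∃ j, i ≤ j ∧ ∀ k, j ≤ k →
      (aDown A α (k - i) i).range = (aDown A α (j - i) i).range) :
    ∃ (B : ℕ → GrpCat) (β : ∀ i, ↥(B (i + 1)) →* ↥(B i))
      (s : ∀ i, A i →* ↥(B i)) (t : ∀ i, ↥(B i) →* C i),
      (∀ i a, s i (α i a) = β i (s (i + 1) a)) ∧
      (∀ i b, t i (β i b) = γ i (t (i + 1) b)) ∧
      (∀ i a, t i (s i a) = f i a) ∧
      (∀ i, Function.Surjective (s i)) ∧
      -- `lim A → lim B` is surjective
      (∀ b : ∀ i, ↥(B i), (∀ i, β i (b (i + 1)) = b i) →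
        ∃ a : ∀ i, A i, (∀ i, α i (a (i + 1)) = a i) ∧ ∀ i, s i (a i) = b i) ∧
      -- `lim B → lim C` is injective
      (∀ b b' : ∀ i, ↥(B i), (∀ i, β i (b (i + 1)) = b i) →
        (∀ i, β i (b' (i + 1)) = b' i) → (∀ i, t i (b i) = t i (b' i)) → b = b') ∧
      -- `lim¹ B` is trivial
      (∀ g g' : ∀ i, ↥(B i), ∃ c : ∀ i, ↥(B i),
        ∀ i, c i * g i * (β i (c (i + 1)))⁻¹ = g' i) := by
  classical
  choose j hj hspec using hML
  set N : ∀ i, Subgroup (A i) := fun i => Ngrp A C α f i with hN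
  set Bt : ℕ → Type := fun i => A i ⧸ N i with hBt
  set β : ∀ i, Bt (i + 1) →* Bt i :=
    fun i => QuotientGroup.map (N (i + 1)) (N i) (α i) (n2 A C α γ f hf i) with hβ
  set s : ∀ i, A i →* Bt i := fun i => QuotientGroup.mk' (N i) with hs
  set t : ∀ i, Bt i →* C i := fun i => QuotientGroup.lift (N i) (f i) (n1 A C α f i) with ht
  -- compatibility s/β
  have comp_s : ∀ i a, s i (α i a) = β i (s (i + 1) a) := fun i a => rfl
  -- n3 equality
  have n3eq : ∀ i m, j i ≤ i + m →
      Subgroup.map (aDown A α m i) (N (i + m)) = Mgrp A C α f i := fun i m h =>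
    le_antisymm (n3le A C α γ f j hj hspec hf i m h) (n3ge A C α f i m)
  -- s and aDown commute
  have s_aDown : ∀ m i (x : A (i + m)),
      s i (aDown A α m i x) = aDown Bt β m i (s (i + m) x) := by
    intro m
    induction m with
    | zero => intro i x; rfl
    | succ m ih =>
      intro i x
      show s i (aDown A α m i (α (i + m) x)) = aDown Bt β m i (β (i + m) (s (i + m + 1) x))
      rw [ih i (α (i + m) x)]
      rfl
  -- the key surjectivity onto limits, proven as `have` for reuse
  have limSurj : ∀ b : ∀ i, Bt i, (∀ i, β i (b (i + 1)) = b i) →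
      ∃ a : ∀ i, A i, (∀ i, α i (a (i + 1)) = a i) ∧ ∀ i, s i (a i) = b i := by
    intro b hb
    choose p hp using fun k => QuotientGroup.mk'_surjective (N k) (b k)
    have bdown_b : ∀ m i, aDown Bt β m i (b (i + m)) = b i := by
      intro m
      induction m with
      | zero => intro i; rfl
      | succ m ih =>
        intro i
        show aDown Bt β m i (β (i + m) (b (i + m + 1))) = b i
        rw [hb (i + m)]
        exact ih i
    have e_sD : ∀ i m (w : A (i + m)), s (i + m) w = b (i + m) →
        s i (aDown A α m i w) = b i := by
      intro i m w hw
      rw [s_aDown, hw, bdown_b]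
    -- KeyFib
    have keyFib : ∀ i m r (_ : j i ≤ i + m) (w : A (i + m)) (_ : s (i + m) w = b (i + m)),
        ∃ w' : A (i + (m + r)), s (i + (m + r)) w' = b (i + (m + r)) ∧
          aDown A α (m + r) i w' = aDown A α m i w := by
      intro i m r hm w hw
      set v : A ((i + m) + r) := p ((i + m) + r) with hv
      have hvs : s ((i + m) + r) v = b ((i + m) + r) := hp _
      set u : A (i + m) := aDown A α r (i + m) v with hu
      have hus : s (i + m) u = b (i + m) := e_sD (i + m) r v hvs
      have hn : w * u⁻¹ ∈ N (i + m) := by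
        rw [← QuotientGroup.ker_mk' (N (i + m)), MonoidHom.mem_ker]
        show s (i + m) (w * u⁻¹) = 1
        rw [map_mul, map_inv, hw, hus, mul_inv_cancel]
      have hd : aDown A α m i (w * u⁻¹) ∈ Mgrp A C α f i := by
        rw [← n3eq i m hm]
        exact ⟨w * u⁻¹, hn, rfl⟩
      have hd2 : aDown A α m i (w * u⁻¹) ∈
          Subgroup.map (aDown A α (m + r) i) (N (i + (m + r))) :=
        n3ge A C α f i (m + r) hd
      obtain ⟨n', hn', hdn⟩ := hd2
      set vc : A (i + (m + r)) := cast (congrArg A (Nat.add_assoc i m r)) v with hvc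
      have hvcs : s (i + (m + r)) vc = b (i + (m + r)) := by
        exact cast_pred (X := A) (fun n a => s n a = b n) (Nat.add_assoc i m r) _ v hvs
      have hvcd : aDown A α (m + r) i vc = aDown A α m i u := by
        rw [hvc, hu]
        rw [aDown_eq_tDown, aDown_eq_tDown, aDown_eq_tDown]
        exact tDown_comp (fun k => ⇑(α k)) r m i v
      refine ⟨n' * vc, ?_, ?_⟩
      · rw [map_mul, hvcs]
        have : s (i + (m + r)) n' = 1 := by
          rw [hs]
          exact (QuotientGroup.eq_one_iff n').mpr hn'
        rw [this, one_mul]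
      · rw [map_mul, hdn, hvcd, ← map_mul]
        rw [inv_mul_cancel_right]
    -- the fiber system
    set D : ∀ k, Set (A k) := fun k =>
      {x | ∃ m, ∃ w : A (k + m), j k ≤ k + m ∧ s (k + m) w = b (k + m) ∧
        aDown A α m k w = x} with hD
    have h0 : (D 0).Nonempty :=
      ⟨aDown A α (j 0) 0 (p (0 + j 0)), j 0, p (0 + j 0), by omega, hp _, rfl⟩
    have hstep : ∀ k x, x ∈ D k → ∃ x', x' ∈ D (k + 1) ∧ α k x' = x := by
      intro k x hx
      obtain ⟨m, w, hjm, hw, hxw⟩ := hx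
      set r : ℕ := max 1 (j (k + 1) - (k + m)) with hr
      have hr1 : 1 ≤ r := le_max_left _ _
      have hr2 : j (k + 1) ≤ k + m + r := by
        have := le_max_right 1 (j (k + 1) - (k + m)); omega
      obtain ⟨w', hw's, hw'd⟩ := keyFib k m r hjm w hw
      set m' : ℕ := m + r - 1 with hm'
      have hmr : m + r = m' + 1 := by omega
      set wA : A (k + (m' + 1)) :=
        cast (congrArg A (by omega : k + (m + r) = k + (m' + 1))) w' with hwA
      set wB : A ((k + 1) + m') :=
        cast (congrArg A (by omega : k + (m' + 1) = (k + 1) + m')) wA with hwB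
      refine ⟨aDown A α m' (k + 1) wB, ⟨m', wB, by omega, ?_, rfl⟩, ?_⟩
      · have h1 : s (k + (m' + 1)) wA = b (k + (m' + 1)) :=
          cast_pred (X := A) (fun n a => s n a = b n) (by omega) _ w' hw's
        exact cast_pred (X := A) (fun n a => s n a = b n) (by omega) _ wA h1
      · have e1 : aDown A α (m' + 1) k wA = aDown A α (m + r) k w' := by
          rw [aDown_eq_tDown, aDown_eq_tDown]
          exact tDown_cast (fun k => ⇑(α k)) k hmr (congrArg A (by omega)) w'
        have e2 : aDown A α (m' + 1) k wA = α k (aDown A α m' (k + 1) wB) :=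
          aDown_peel A α m' k wA
        rw [← e2, e1, hw'd, hxw]
    obtain ⟨Y, hYD, hYt⟩ := buildThread (fun k => (1 : A k)) (fun k => ⇑(α k)) D h0 hstep
    refine ⟨Y, hYt, fun i => ?_⟩
    obtain ⟨m, w, hjm, hw, hxw⟩ := hYD i
    rw [← hxw]
    exact e_sD i m w hw
  -- injectivity on limits (core)
  have limInj : ∀ b b' : ∀ i, Bt i, (∀ i, β i (b (i + 1)) = b i) →
      (∀ i, β i (b' (i + 1)) = b' i) → (∀ i, t i (b i) = t i (b' i)) →
      ∀ i, b i = b' i := by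
    intro b b' hb hb' htb
    obtain ⟨a, ha, hsa⟩ := limSurj b hb
    obtain ⟨a', ha', hsa'⟩ := limSurj b' hb'
    have hfa : ∀ k, f k (a k) = f k (a' k) := by
      intro k
      have h1 : t k (s k (a k)) = f k (a k) := rfl
      have h2 : t k (s k (a' k)) = f k (a' k) := rfl
      rw [← h1, ← h2, hsa, hsa', htb]
    intro i
    rw [← hsa i, ← hsa' i]
    have hmem : (a i)⁻¹ * a' i ∈ N i := by
      refine Subgroup.subset_normalClosure ?_
      refine ⟨fun k => (a k)⁻¹ * a' k, rfl, ?_, ?_⟩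
      · intro k _
        show α k ((a (k+1))⁻¹ * a' (k+1)) = (a k)⁻¹ * a' k
        rw [map_mul, map_inv, ha, ha']
      · intro k _
        show f k ((a k)⁻¹ * a' k) = 1
        rw [map_mul, map_inv, hfa, inv_mul_cancel]
    show QuotientGroup.mk' (N i) (a i) = QuotientGroup.mk' (N i) (a' i)
    rw [QuotientGroup.mk'_eq_mk']
    exact ⟨(a i)⁻¹ * a' i, hmem, by group⟩
  -- lim¹ trivial (core)
  have lim1 : ∀ g g' : ∀ i, Bt i, ∃ c : ∀ i, Bt i,
      ∀ i, c i * g i * (β i (c (i + 1)))⁻¹ = g' i := by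
    intro g g'
    set δ : ∀ i, Bt (i + 1) → Bt i := fun i x => g' i * β i x * (g i)⁻¹ with hδ
    set Lf : ∀ i, ℕ → Bt i := fun i m =>
      Nat.rec 1 (fun m L => L * aDown Bt β m i (g' (i + m))) m with hLf
    set Rf : ∀ i, ℕ → Bt i := fun i m =>
      Nat.rec 1 (fun m R => aDown Bt β m i ((g (i + m))⁻¹) * R) m with hRf
    have LfS : ∀ i m, Lf i (m + 1) = Lf i m * aDown Bt β m i (g' (i + m)) := fun i m => rfl
    have RfS : ∀ i m, Rf i (m + 1) = aDown Bt β m i ((g (i + m))⁻¹) * Rf i m := fun i m => rfl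
    have Δeq : ∀ m i (w : Bt (i + m)),
        tDown δ m i w = Lf i m * aDown Bt β m i w * Rf i m := by
      intro m
      induction m with
      | zero => intro i w; show w = 1 * w * 1; group
      | succ m ih =>
        intro i w
        show tDown δ m i (δ (i + m) w) = _
        rw [ih i (δ (i + m) w), LfS, RfS]
        have hδw : δ (i + m) w = g' (i + m) * β (i + m) w * (g (i + m))⁻¹ := rfl
        rw [hδw, map_mul, map_mul]
        have : aDown Bt β m i (β (i + m) w) = aDown Bt β (m + 1) i w := rfl
        rw [this]
        group
    have BdStab : ∀ i m, j i ≤ i + m → ∀ z : Bt i,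
        z ∈ (aDown Bt β m i).range → z ∈ (aDown Bt β (m + 1) i).range := by
      intro i m hm z hz
      obtain ⟨y, rfl⟩ := hz
      obtain ⟨ytil, rfl⟩ := QuotientGroup.mk'_surjective (N (i + m)) y
      have h1 : aDown Bt β m i (QuotientGroup.mk' (N (i + m)) ytil)
          = s i (aDown A α m i ytil) := (s_aDown m i ytil).symm
      have h2 : aDown A α m i ytil ∈ (aDown A α (m + 1) i).range := by
        rw [S_eq' A α j hspec i (m + 1) (by omega)]
        rw [← S_eq' A α j hspec i m hm]
        exact ⟨ytil, rfl⟩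
      obtain ⟨z', hz'⟩ := h2
      refine ⟨s (i + (m + 1)) z', ?_⟩
      rw [← s_aDown (m + 1) i z', hz', h1]
    have TwKey1 : ∀ i m, j i ≤ i + m → ∀ w : Bt (i + m),
        ∃ w' : Bt (i + (m + 1)), tDown δ (m + 1) i w' = tDown δ m i w := by
      intro i m hm w
      set u : Bt (i + m) := (g' (i + m))⁻¹ * w * g (i + m) with hu
      have hmem : aDown Bt β m i u ∈ (aDown Bt β (m + 1) i).range :=
        BdStab i m hm _ ⟨u, rfl⟩
      obtain ⟨w', hw'⟩ := hmem
      refine ⟨w', ?_⟩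
      rw [Δeq (m + 1) i w', Δeq m i w, LfS, RfS]
      have X : aDown Bt β m i (g' (i + m)) * aDown Bt β m i u
            * aDown Bt β m i ((g (i + m))⁻¹) = aDown Bt β m i w := by
        rw [← map_mul, ← map_mul]
        congr 1
        rw [hu]; group
      calc (Lf i m * aDown Bt β m i (g' (i + m))) * aDown Bt β (m + 1) i w' *
            (aDown Bt β m i ((g (i + m))⁻¹) * Rf i m)
          = Lf i m * (aDown Bt β m i (g' (i + m)) * aDown Bt β m i u *
            aDown Bt β m i ((g (i + m))⁻¹)) * Rf i m := by rw [hw']; group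
        _ = Lf i m * aDown Bt β m i w * Rf i m := by rw [X]
    have TwKey : ∀ i m (_ : j i ≤ i + m) r (w : Bt (i + m)),
        ∃ w' : Bt (i + (m + r)), tDown δ (m + r) i w' = tDown δ m i w := by
      intro i m hm r
      induction r with
      | zero => intro w; exact ⟨w, rfl⟩
      | succ r ih =>
        intro w
        obtain ⟨w1, hw1⟩ := ih w
        obtain ⟨w', hw'⟩ := TwKey1 i (m + r) (by omega) w1
        exact ⟨w', hw'.trans hw1⟩
    set D' : ∀ k, Set (Bt k) := fun k =>
      {x | ∃ m, ∃ w : Bt (k + m), j k ≤ k + m ∧ tDown δ m k w = x} with hD'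
    have h0 : (D' 0).Nonempty := ⟨tDown δ (j 0) 0 1, j 0, 1, by omega, rfl⟩
    have hstep : ∀ k x, x ∈ D' k → ∃ x', x' ∈ D' (k + 1) ∧ δ k x' = x := by
      intro k x hx
      obtain ⟨m, w, hjm, hxw⟩ := hx
      set r : ℕ := max 1 (j (k + 1) - (k + m)) with hr
      have hr1 : 1 ≤ r := le_max_left _ _
      have hr2 : j (k + 1) ≤ k + m + r := by
        have := le_max_right 1 (j (k + 1) - (k + m)); omega
      obtain ⟨w', hw'⟩ := TwKey k m hjm r w
      set m' : ℕ := m + r - 1 with hm'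
      have hmr : m + r = m' + 1 := by omega
      set wA : Bt (k + (m' + 1)) :=
        cast (congrArg Bt (by omega : k + (m + r) = k + (m' + 1))) w' with hwA
      set wB : Bt ((k + 1) + m') :=
        cast (congrArg Bt (by omega : k + (m' + 1) = (k + 1) + m')) wA with hwB
      refine ⟨tDown δ m' (k + 1) wB, ⟨m', wB, by omega, rfl⟩, ?_⟩
      have e1 : tDown δ (m' + 1) k wA = tDown δ (m + r) k w' :=
        tDown_cast δ k hmr (congrArg Bt (by omega)) w'
      have e2 : tDown δ (m' + 1) k wA = δ k (tDown δ m' (k + 1) wB) :=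
        tDown_peel δ m' k wA
      rw [← e2, e1, hw', hxw]
    obtain ⟨c, hcD, hct⟩ := buildThread (fun k => (1 : Bt k)) δ D' h0 hstep
    refine ⟨c, fun i => ?_⟩
    rw [← hct i]
    show g' i * β i (c (i + 1)) * (g i)⁻¹ * g i * (β i (c (i + 1)))⁻¹ = g' i
    group
  -- now wrap everything in ULift to match the (universe polymorphic) Grp
  refine ⟨fun i => GrpCat.of (ULift (Bt i)),
    fun i => MulEquiv.ulift.symm.toMonoidHom.comp
      ((β i).comp MulEquiv.ulift.toMonoidHom),
    fun i => MulEquiv.ulift.symm.toMonoidHom.comp (s i),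
    fun i => (t i).comp MulEquiv.ulift.toMonoidHom,
    ?_, ?_, ?_, ?_, ?_, ?_, ?_⟩
  · -- s/β compatibility
    intro i a
    exact congrArg ULift.up (comp_s i a)
  · -- t/β compatibility
    intro i x
    show t i (β i x.down) = γ i (t (i + 1) x.down)
    refine QuotientGroup.induction_on x.down ?_
    intro a
    show f i (α i a) = γ i (f (i + 1) a)
    exact hf i a
  · -- t ∘ s = f
    intro i a
    rfl
  · -- surjectivity of s
    intro i y
    obtain ⟨a, ha⟩ := QuotientGroup.mk'_surjective (N i) y.down
    exact ⟨a, congrArg ULift.up ha⟩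
  · -- lim surjectivity
    intro b hb
    obtain ⟨a, ha, hsa⟩ := limSurj (fun i => (b i).down)
      (fun i => congrArg ULift.down (hb i))
    exact ⟨a, ha, fun i => congrArg ULift.up (hsa i)⟩
  · -- lim injectivity
    intro b b' hb hb' htb
    funext i
    exact congrArg ULift.up (limInj (fun i => (b i).down) (fun i => (b' i).down)
      (fun i => congrArg ULift.down (hb i)) (fun i => congrArg ULift.down (hb' i))
      htb i)
  · -- lim¹
    intro g g'
    obtain ⟨c, hc⟩ := lim1 (fun i => (g i).down) (fun i => (g' i).down)
    exact ⟨fun i => ULift.up (c i), fun i => congrArg ULift.up (hc i)⟩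
end

section
/- Let (G_{ij}, p_{ij}, h_{ij}) be a direct sequence of towers of groups in which every G_{ij} is a countable abelian group and every vertical bonding homomorphism p_{ij} : G_{i+1,j} → G_{ij} is injective. For each j let Γ_j = lim¹_i G_{ij}, the cokernel of the homomorphism d_j : ∏_i G_{ij} → ∏_i G_{ij} defined by d_j(g)_i = g_i − p_{ij}(g_{i+1}); the horizontal maps induce homomorphisms Γ_j → Γ_{j+1}, with composites Γ_j → Γ_k for j ≤ k. Suppose that for every j and every γ ∈ Γ_j there exists k ≥ j such that the composite homomorphism Γ_j → Γ_k sends γ to 0. Then for each j there exists k > j such that the composite homomorphism Γ_j → Γ_k is the zero homomorphism. -/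
section Aux

variable {G : ℕ → ℕ → Type*} [∀ i j, AddCommGroup (G i j)]

/-- Downward chain construction for solving `g i = c i - p (c (i+1))` when `g` is
eventually zero. -/
def chainAux (p : ∀ i j, G (i + 1) j →+ G i j) (J : ℕ) (g : ∀ i, G i J) :
    ℕ → ∀ i, G i J
  | 0 => fun _ => 0
  | t + 1 => fun i => g i + p i J (chainAux p J g t (i + 1))

theorem chain_solves (p : ∀ i j, G (i + 1) j →+ G i j) (J : ℕ) (g : ∀ i, G i J)
    (N : ℕ) (hg : ∀ i, N ≤ i → g i = 0) :
    ∀ i, g i = chainAux p J g (N - i) i - p i J (chainAux p J g (N - (i + 1)) (i + 1)) := by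
  intro i
  rcases lt_or_ge i N with hi | hi
  · have h1 : N - i = (N - (i + 1)) + 1 := by omega
    rw [h1]
    show g i = (g i + p i J (chainAux p J g (N - (i+1)) (i + 1))) - _
    abel
  · have h1 : N - i = 0 := by omega
    have h2 : N - (i + 1) = 0 := by omega
    rw [h1, h2]
    show g i = 0 - p i J 0
    rw [map_zero, hg i hi]
    abel

end Aux

/-- Proposition (the injective case of Theorem A(c)): for a direct sequence of towers
of countable abelian groups with injective vertical bonding maps, set
`Γ_j = lim¹_i G_{ij}`, the cokernel of `d_j(g)_i = g_i − p_{ij}(g_{i+1})`; elements of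
`Γ_j` are classes of families `g : ∀ i, G i j`, and the image of such a class in
`Γ_{j+k}` vanishes iff the coordinatewise horizontal image of `g` lies in the range of
`d_{j+k}`.  If the colimit of the `Γ_j` is trivial, then for each `j` there is `k > j`
such that the composite homomorphism `Γ_j → Γ_k` is the zero homomorphism. -/
theorem stmt_10 (G : ℕ → ℕ → Type*) [∀ i j, AddCommGroup (G i j)]
    [∀ i j, Countable (G i j)]
    (p : ∀ i j, G (i + 1) j →+ G i j) (h : ∀ i j, G i j →+ G i (j + 1))
    (hinj : ∀ i j, Function.Injective (p i j))
    (hcomm : ∀ i j (g : G (i + 1) j), h i j (p i j g) = p i (j + 1) (h (i + 1) j g))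
    (htriv : ∀ j (g : ∀ i, G i j), ∃ k, ∃ c : ∀ i, G i (j + k),
      ∀ i, hIter G h i j k (g i) = c i - p i (j + k) (c (i + 1))) :
    ∀ j, ∃ k, 0 < k ∧ ∀ g : ∀ i, G i j, ∃ c : ∀ i, G i (j + k),
      ∀ i, hIter G h i j k (g i) = c i - p i (j + k) (c (i + 1)) := by
  intro j
  classical
  letI : ∀ (i j' : ℕ), TopologicalSpace (G i j') := fun _ _ => ⊥
  haveI : ∀ (i j' : ℕ), DiscreteTopology (G i j') := fun _ _ => ⟨rfl⟩
  letI := TopologicalSpace.upgradeIsCompletelyMetrizable (∀ i, G i j)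
  -- the solvability predicate
  set A : ∀ k : ℕ, (∀ i, G i j) → Prop := fun k g =>
    ∃ c : ∀ i, G i (j + k), ∀ i, hIter G h i j k (g i) = c i - p i (j + k) (c (i + 1))
    with hA
  -- the closed pieces
  set S : (Σ k : ℕ, G 0 (j + k)) → Set (∀ i, G i j) := fun ka =>
    {g | ∃ c : ∀ i, G i (j + ka.1), c 0 = ka.2 ∧
      ∀ i, hIter G h i j ka.1 (g i) = c i - p i (j + ka.1) (c (i + 1))} with hS
  have hcover : ⋃ ka, S ka = Set.univ := by
    ext g
    simp only [Set.mem_iUnion, Set.mem_univ, iff_true]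
    obtain ⟨k, c, hc⟩ := htriv j g
    exact ⟨⟨k, c 0⟩, c, rfl, hc⟩
  have hclosed : ∀ ka, IsClosed (S ka) := by
    rintro ⟨k, a⟩
    rw [← isOpen_compl_iff, isOpen_iff_forall_mem_open]
    intro g hg
    -- partial-solvability predicate
    set P : ℕ → Prop := fun n => ∃ c : ∀ i, G i (j + k), c 0 = a ∧
      ∀ i < n, hIter G h i j k (g i) = c i - p i (j + k) (c (i + 1)) with hP
    have hnP : ∃ n, ¬ P n := by
      by_contra hcon
      push_neg at hcon
      -- uniqueness of partial solutions
      have huniq : ∀ (n : ℕ) (c c' : ∀ i, G i (j + k)), c 0 = a → c' 0 = a →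
          (∀ i < n, hIter G h i j k (g i) = c i - p i (j + k) (c (i + 1))) →
          (∀ i < n, hIter G h i j k (g i) = c' i - p i (j + k) (c' (i + 1))) →
          ∀ i ≤ n, c i = c' i := by
        intro n c c' hc0 hc'0 hc hc' i
        induction i with
        | zero => intro _; rw [hc0, hc'0]
        | succ i ih =>
          intro hin
          have hi : i < n := by omega
          have e1 := hc i hi
          have e2 := hc' i hi
          have hci : c i = c' i := ih (by omega)
          apply hinj i (j + k)
          have e3 : c i - p i (j + k) (c (i + 1)) = c i - p i (j + k) (c' (i + 1)) := by
            rw [← e1, hci]; exact e2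
          exact sub_right_inj.mp e3
      -- build a full solution
      exfalso
      apply hg
      set cc : ℕ → ∀ i, G i (j + k) := fun n => Classical.choose (hcon n) with hcc
      have hccspec : ∀ n, (cc n) 0 = a ∧
          ∀ i < n, hIter G h i j k (g i) = cc n i - p i (j + k) (cc n (i + 1)) :=
        fun n => Classical.choose_spec (hcon n)
      refine ⟨fun i => cc (i + 1) i, (hccspec 1).1, fun i => ?_⟩
      have e := (hccspec (i + 2)).2 i (by omega)
      have h1 : cc (i + 1) i = cc (i + 2) i := by
        refine huniq (i + 1) (cc (i + 1)) (cc (i + 2)) (hccspec (i + 1)).1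
          (hccspec (i + 2)).1 (hccspec (i + 1)).2
          (fun i' hi' => (hccspec (i + 2)).2 i' (by omega)) i (by omega)
      show hIter G h i j k (g i) = cc (i + 1) i - p i (j + k) (cc (i + 1 + 1) (i + 1))
      rw [h1]
      exact e
    obtain ⟨n, hn⟩ := hnP
    refine ⟨{g' | ∀ i ∈ Set.Iio n, g' i ∈ ({g i} : Set (G i j))}, ?_, ?_, ?_⟩
    · intro g' hg' hg'S
      obtain ⟨c, hc0, hc⟩ := hg'S
      exact hn ⟨c, hc0, fun i hi => by
        rw [show g i = g' i from (hg' i hi).symm]; exact hc i⟩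
    · exact isOpen_set_pi (Set.finite_Iio n) (fun i _ => isOpen_discrete _)
    · exact fun i _ => rfl
  -- Baire category
  obtain ⟨ka, hka⟩ := nonempty_interior_of_iUnion_of_closed hclosed hcover
  obtain ⟨k, a⟩ := ka
  obtain ⟨g₀, hg₀⟩ := hka
  obtain ⟨U, hUsub, hUopen, hg₀U⟩ := mem_interior.1 hg₀
  obtain ⟨I, u, hu, hpi⟩ := isOpen_pi_iff.1 hUopen g₀ hg₀U
  set N : ℕ := I.sup id + 1 with hN
  -- every tail element is solvable at level k
  have htail : ∀ gt : ∀ i, G i j, (∀ i < N, gt i = 0) → A k gt := by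
    intro gt hgt
    have hmem : ∀ g' : ∀ i, G i j, (∀ i, i ∈ I → g' i = g₀ i) → g' ∈ S ⟨k, a⟩ := by
      intro g' hg'
      apply hUsub
      apply hpi
      intro i hi
      rw [hg' i hi]
      exact (hu i hi).2
    have h1 : g₀ + gt ∈ S ⟨k, a⟩ := by
      apply hmem
      intro i hi
      have : i < N := by
        have : i ≤ I.sup id := Finset.le_sup (f := id) hi
        omega
      show g₀ i + gt i = g₀ i
      rw [hgt i this, add_zero]
    have h2 : g₀ ∈ S ⟨k, a⟩ := hmem g₀ (fun _ _ => rfl)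
    obtain ⟨c1, -, hc1⟩ := h1
    obtain ⟨c2, -, hc2⟩ := h2
    refine ⟨fun i => c1 i - c2 i, fun i => ?_⟩
    have e1 : hIter G h i j k (g₀ i) + hIter G h i j k (gt i)
        = c1 i - p i (j + k) (c1 (i + 1)) := by
      have e := hc1 i
      rw [show (g₀ + gt) i = g₀ i + gt i from rfl, map_add] at e
      exact e
    have e2 : hIter G h i j k (g₀ i) = c2 i - p i (j + k) (c2 (i + 1)) := hc2 i
    show hIter G h i j k (gt i) = (c1 i - c2 i) - p i (j + k) (c1 (i + 1) - c2 (i + 1))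
    rw [map_sub]
    have e3 : hIter G h i j k (gt i) =
        (c1 i - p i (j + k) (c1 (i + 1))) - (c2 i - p i (j + k) (c2 (i + 1))) := by
      rw [← e1, ← e2]; abel
    rw [e3]; abel
  -- every element is solvable at level k
  have hall : ∀ g : ∀ i, G i j, A k g := by
    intro g
    set gt : ∀ i, G i j := fun i => if i < N then 0 else g i with hgt
    obtain ⟨ct, hct⟩ := htail gt (fun i hi => by simp [hgt, hi])
    set gh' : ∀ i, G i (j + k) := fun i => hIter G h i j k (if i < N then g i else 0)
      with hgh'
    have hgh'0 : ∀ i, N ≤ i → gh' i = 0 := by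
      intro i hi
      simp only [hgh', if_neg (by omega : ¬ i < N), map_zero]
    have hch := chain_solves p (j + k) gh' N hgh'0
    refine ⟨fun i => chainAux p (j + k) gh' (N - i) i + ct i, fun i => ?_⟩
    have hsplit : g i = (if i < N then g i else 0) + gt i := by
      by_cases hi : i < N <;> simp [hgt, hi]
    show hIter G h i j k (g i) = (chainAux p (j + k) gh' (N - i) i + ct i)
      - p i (j + k) (chainAux p (j + k) gh' (N - (i + 1)) (i + 1) + ct (i + 1))
    rw [hsplit, map_add]
    have hrfl : hIter G h i j k (if i < N then g i else 0) = gh' i := rfl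
    rw [hrfl, hch i, hct i, map_add]
    abel
  -- bump to k + 1 to ensure positivity
  refine ⟨k + 1, Nat.succ_pos _, fun g => ?_⟩
  obtain ⟨c, hc⟩ := hall g
  refine ⟨fun i => h i (j + k) (c i), fun i => ?_⟩
  show h i (j + k) (hIter G h i j k (g i)) = _
  rw [hc i, map_sub, hcomm]
  rfl
end

section
/- Let (G_{ij}, p_{ij}, h_{ij}) be a direct sequence of towers of groups in which every G_{ij} is a countable abelian group. For each j let Γ_j = lim¹_i G_{ij}, the cokernel of the homomorphism d_j : ∏_i G_{ij} → ∏_i G_{ij} defined by d_j(g)_i = g_i − p_{ij}(g_{i+1}); the horizontal maps induce homomorphisms Γ_j → Γ_{j+1}, with composites Γ_j → Γ_k for j ≤ k. Suppose each induced homomorphism Γ_j → Γ_{j+1} is surjective, and that for every j and every γ ∈ Γ_j there exists k ≥ j such that the composite homomorphism Γ_j → Γ_k sends γ to 0. Then for each j there exists k > j such that the composite homomorphism Γ_j → Γ_k is the zero homomorphism. -/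
open Set Topology Filter

universe u

set_option linter.unusedSectionVars false
set_option linter.unusedVariables false

section Hull
variable {X : Type*} [TopologicalSpace X] [SecondCountableTopology X]

/-- The set of points near which `S` is nonmeagre. -/
def ddd (S : Set X) : Set X := {x | ∀ U ∈ 𝓝 x, ¬ IsMeagre (S ∩ U)}

omit [SecondCountableTopology X] in
lemma isClosed_ddd (S : Set X) : IsClosed (ddd S) := by
  rw [← isOpen_compl_iff, isOpen_iff_mem_nhds]
  intro x hx
  simp only [ddd, mem_compl_iff, mem_setOf_eq, not_forall] at hx
  obtain ⟨U, hU, hm⟩ := hx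
  rw [not_not] at hm
  refine mem_of_superset (interior_mem_nhds.mpr hU) ?_
  intro y hy hdd
  exact hdd U (mem_nhds_iff.mpr ⟨interior U, interior_subset, isOpen_interior, hy⟩) hm

lemma diff_ddd_meagre (S : Set X) : IsMeagre (S \ ddd S) := by
  obtain ⟨b, hbc, -, hb⟩ := TopologicalSpace.exists_countable_basis X
  have hsub : S \ ddd S ⊆ ⋃ t ∈ {t ∈ b | IsMeagre (S ∩ t)}, (S ∩ t) := by
    rintro x ⟨hxS, hxd⟩
    simp only [ddd, mem_setOf_eq, not_forall] at hxd
    obtain ⟨U, hU, hm⟩ := hxd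
    rw [not_not] at hm
    obtain ⟨t, htb, hxt, htU⟩ := hb.mem_nhds_iff.mp hU
    exact mem_biUnion ⟨htb, hm.mono (inter_subset_inter_right _ htU)⟩ ⟨hxS, hxt⟩
  refine IsMeagre.mono hsub ?_
  rw [IsMeagre, compl_iUnion₂]
  exact (countable_bInter_mem (hbc.mono (sep_subset _ _))).mpr (fun t ht => ht.2)

/-- Baire hull of a set. -/
def bHull (S : Set X) : Set X := S ∪ ddd S

omit [SecondCountableTopology X] in
lemma subset_bHull (S : Set X) : S ⊆ bHull S := subset_union_left

lemma baireMeasurableSet_bHull (S : Set X) : BaireMeasurableSet (bHull S) := by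
  have : bHull S = ddd S ∪ (S \ ddd S) := by
    simp only [bHull, union_diff_self]
    rw [union_comm]
  rw [this]
  exact ((isClosed_ddd S).isOpen_compl.baireMeasurableSet.of_compl).union
    (diff_ddd_meagre S).baireMeasurableSet

lemma meagre_of_subset_bHull_diff {S Z : Set X} (hZ : BaireMeasurableSet Z)
    (h1 : Z ⊆ bHull S) (h2 : ∀ x ∈ Z, x ∉ S) : IsMeagre Z := by
  by_contra hnm
  obtain ⟨U, hUo, hUe⟩ := hZ.residualEq_isOpen
  have hE : {x | x ∈ Z ↔ x ∈ U} ∈ residual X := by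
    have := hUe
    rw [Filter.eventuallyEq_set] at this
    exact this
  have hZU : IsMeagre (Z \ U) := by
    refine Filter.mem_of_superset hE ?_
    intro x hx hxZU
    exact hxZU.2 (hx.mp hxZU.1)
  have hUZ : IsMeagre (U \ Z) := by
    refine Filter.mem_of_superset hE ?_
    intro x hx hxUZ
    exact hxUZ.2 (hx.mpr hxUZ.1)
  have hZUne : (Z ∩ U).Nonempty := by
    rcases (Z ∩ U).eq_empty_or_nonempty with he | hne
    · exfalso; apply hnm
      have : Z ⊆ Z \ U := fun x hx => ⟨hx, fun hxU => by
        have : x ∈ Z ∩ U := ⟨hx, hxU⟩; rw [he] at this; exact this⟩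
      exact hZU.mono this
    · exact hne
  obtain ⟨x, hxZ, hxU⟩ := hZUne
  have hxd : x ∈ ddd S := (h1 hxZ).resolve_left (h2 x hxZ)
  refine hxd U (hUo.mem_nhds hxU) ?_
  refine hUZ.mono ?_
  intro y ⟨hyS, hyU⟩
  exact ⟨hyU, fun hyZ => h2 y hyZ hyS⟩

end Hull

section Suslin
variable {X : Type*} [TopologicalSpace X] [SecondCountableTopology X]
  {C : ℕ → Type*} [∀ n, Countable (C n)] [∀ n, Nonempty (C n)]

lemma isMeagre_iUnion' {ι : Sort*} [Countable ι] {s : ι → Set X}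
    (h : ∀ i, IsMeagre (s i)) : IsMeagre (⋃ i, s i) := by
  rw [IsMeagre, compl_iUnion]
  exact countable_iInter_mem.mpr h

variable (Q : ℕ → (∀ i, C i) → Set X)

def AS (n : ℕ) (c : ∀ i, C i) : Set X :=
  {x | ∃ c', (∀ i < n, c' i = c i) ∧ ∀ m, x ∈ Q m c'}

def HS (n : ℕ) (c : ∀ i, C i) : Set X :=
  ⋂ m ∈ {m : ℕ | m ≤ n}, (bHull (AS Q m c) ∩ Q m c)

def pieceS (n : ℕ) (c : ∀ i, C i) : Set X :=
  HS Q n c \ ⋃ a : C n, HS Q (n+1) (Function.update c n a)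

noncomputable def extS (n : ℕ) (s : ∀ i : Fin n, C i) : ∀ i, C i :=
  fun i => if h : i < n then s ⟨i, h⟩ else Classical.arbitrary _

def MS : Set X := ⋃ (n : ℕ), ⋃ (s : ∀ i : Fin (n+2), C i), pieceS Q n (extS (n+2) s)

variable (hQd : ∀ n (c c' : ∀ i, C i), (∀ i < n, c i = c' i) → Q n c = Q n c')

omit [SecondCountableTopology X] [∀ n, Countable (C n)] [∀ n, Nonempty (C n)] in
lemma AS_congr : ∀ n (c c' : ∀ i, C i), (∀ i < n, c i = c' i) → AS Q n c = AS Q n c' := by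
  intro n c c' hcc
  ext x
  constructor <;> rintro ⟨d, hd1, hd2⟩
  · exact ⟨d, fun i hi => (hd1 i hi).trans (hcc i hi), hd2⟩
  · exact ⟨d, fun i hi => (hd1 i hi).trans (hcc i hi).symm, hd2⟩

omit [SecondCountableTopology X] [∀ n, Countable (C n)] [∀ n, Nonempty (C n)] in
lemma HS_mem (n : ℕ) (c : ∀ i, C i) (x : X) :
    x ∈ HS Q n c ↔ ∀ m ≤ n, x ∈ bHull (AS Q m c) ∧ x ∈ Q m c := by
  simp only [HS, mem_iInter, mem_inter_iff, mem_setOf_eq]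

omit [SecondCountableTopology X] [∀ n, Countable (C n)] [∀ n, Nonempty (C n)] in
include hQd in
lemma HS_congr : ∀ n (c c' : ∀ i, C i), (∀ i < n + 1, c i = c' i) → HS Q n c = HS Q n c' := by
  intro n c c' hcc
  refine iInter₂_congr (fun m hm => ?_)
  have hm' : m ≤ n := hm
  rw [AS_congr Q m c c' (fun i hi => hcc i (by omega)),
    hQd m c c' (fun i hi => hcc i (by omega))]

variable (hQm : ∀ n c, BaireMeasurableSet (Q n c))

omit [∀ n, Countable (C n)] [∀ n, Nonempty (C n)] in
include hQm in
lemma HS_bp (n : ℕ) (c : ∀ i, C i) : BaireMeasurableSet (HS Q n c) :=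
  BaireMeasurableSet.biInter (Set.finite_le_nat n).countable
    (fun m _ => (baireMeasurableSet_bHull (AS Q m c)).inter (hQm m c))

omit [SecondCountableTopology X] [∀ n, Countable (C n)] [∀ n, Nonempty (C n)] in
include hQd in
lemma AS_cover : ∀ n (c : ∀ i, C i),
    AS Q n c ⊆ ⋃ a : C n, HS Q (n + 1) (Function.update c n a) := by
  intro n c x hx
  obtain ⟨c', hc'1, hc'2⟩ := hx
  refine mem_iUnion.mpr ⟨c' n, ?_⟩
  have hagree : ∀ i < n + 1, c' i = Function.update c n (c' n) i := by
    intro i hi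
    rcases Nat.lt_trichotomy i n with h | rfl | h
    · rw [Function.update_of_ne (Nat.ne_of_lt h), hc'1 i h]
    · rw [Function.update_self]
    · omega
  rw [HS_mem]
  intro m hm
  refine ⟨subset_bHull _ ⟨c', fun i hi => hagree i (lt_of_lt_of_le hi hm), hc'2⟩, ?_⟩
  rw [hQd m (Function.update c n (c' n)) c'
    (fun i hi => (hagree i (lt_of_lt_of_le hi hm)).symm)]
  exact hc'2 m

include hQd hQm in
lemma pieceS_meagre (n : ℕ) (c : ∀ i, C i) : IsMeagre (pieceS Q n c) := by
  refine meagre_of_subset_bHull_diff (S := AS Q n c)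
    ((HS_bp Q hQm n c).diff (BaireMeasurableSet.iUnion fun a => HS_bp Q hQm _ _)) ?_ ?_
  · intro x hx
    exact (((HS_mem Q n c x).mp hx.1) n le_rfl).1
  · intro x hx hxA
    exact hx.2 (AS_cover Q hQd n c hxA)

omit [SecondCountableTopology X] [∀ n, Countable (C n)] [∀ n, Nonempty (C n)] in
include hQd in
lemma pieceS_congr : ∀ n (c c' : ∀ i, C i), (∀ i < n + 2, c i = c' i) →
    pieceS Q n c = pieceS Q n c' := by
  intro n c c' hcc
  have h1 : HS Q n c = HS Q n c' := HS_congr Q hQd n c c' (fun i hi => hcc i (by omega))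
  have h2 : ∀ a : C n, HS Q (n+1) (Function.update c n a)
      = HS Q (n+1) (Function.update c' n a) := by
    intro a
    refine HS_congr Q hQd _ _ _ (fun i hi => ?_)
    rcases eq_or_ne i n with rfl | hne
    · simp
    · rw [Function.update_of_ne hne, Function.update_of_ne hne]
      exact hcc i hi
  unfold pieceS
  rw [h1, iUnion_congr h2]

include hQd hQm in
lemma MS_meagre : IsMeagre (MS Q) :=
  isMeagre_iUnion' fun n => isMeagre_iUnion' fun s => pieceS_meagre Q hQd hQm _ _

omit [SecondCountableTopology X] [∀ n, Countable (C n)] in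
include hQd in
lemma pieceS_subset_MS (n : ℕ) (c : ∀ i, C i) : pieceS Q n c ⊆ MS Q := by
  have heq : pieceS Q n c = pieceS Q n (extS (n+2) (fun i => c i)) := by
    refine pieceS_congr Q hQd n _ _ (fun i hi => ?_)
    unfold extS
    rw [dif_pos hi]
  intro x hx
  rw [heq] at hx
  exact mem_iUnion.mpr ⟨n, mem_iUnion.mpr ⟨_, hx⟩⟩

omit [SecondCountableTopology X] [∀ n, Countable (C n)] in
include hQd in
lemma HS_step {x : X} (hxM : x ∉ MS Q) (n : ℕ) (c : ∀ i, C i) (hx : x ∈ HS Q n c) :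
    ∃ a, x ∈ HS Q (n+1) (Function.update c n a) := by
  by_contra hno
  push_neg at hno
  refine hxM (pieceS_subset_MS Q hQd n c ⟨hx, ?_⟩)
  rw [mem_iUnion]
  rintro ⟨a, ha⟩
  exact hno a ha

omit [SecondCountableTopology X] [∀ n, Countable (C n)] in
include hQd in
lemma HS_branch {x : X} {c₀ : ∀ i, C i} (hx0 : x ∈ HS Q 0 c₀) (hxM : x ∉ MS Q) :
    ∃ c, ∀ n, x ∈ Q n c := by
  choose f hf using HS_step Q hQd hxM
  let F : (n : ℕ) → {c : ∀ i, C i // x ∈ HS Q n c} :=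
    fun n => Nat.rec ⟨c₀, hx0⟩
      (fun n ih => ⟨Function.update ih.1 n (f n ih.1 ih.2), hf n ih.1 ih.2⟩) n
  have hFdef : ∀ n, (F (n+1)).1 = Function.update (F n).1 n (f n (F n).1 (F n).2) :=
    fun n => rfl
  have hFsucc : ∀ n, ∀ i ≠ n, (F (n+1)).1 i = (F n).1 i := by
    intro n i hi
    rw [hFdef n]
    exact Function.update_of_ne hi _ _
  have hagree2 : ∀ n, ∀ i < n, (F n).1 i = (F (i+1)).1 i := by
    intro n
    induction n with
    | zero => intro i hi; omega
    | succ n ih =>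
      intro i hi
      rcases Nat.lt_or_ge i n with h | h
      · rw [hFsucc n i (by omega), ih i h]
      · have hin : i = n := by omega
        subst hin
        rfl
  refine ⟨fun i => (F (i+1)).1 i, fun n => ?_⟩
  have hx' := ((HS_mem Q n (F n).1 x).mp (F n).2) n le_rfl
  rw [hQd n (F n).1 (fun i => (F (i+1)).1 i) (hagree2 n)] at hx'
  exact hx'.2

include hQd hQm in
theorem baireMeasurableSet_suslin :
    BaireMeasurableSet {x | ∃ c, ∀ n, x ∈ Q n c} := by
  classical
  set cdef : ∀ i, C i := fun i => Classical.arbitrary _ with hcdef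
  have hsub1 : {x | ∃ c, ∀ n, x ∈ Q n c} ⊆ HS Q 0 cdef := by
    rintro x ⟨c', hc'⟩
    rw [HS_mem]
    intro m hm
    interval_cases m
    refine ⟨subset_bHull _ ⟨c', fun i hi => by omega, hc'⟩, ?_⟩
    rw [hQd 0 cdef c' (fun i hi => by omega)]
    exact hc' 0
  have hsplit : {x | ∃ c, ∀ n, x ∈ Q n c}
      = (HS Q 0 cdef \ MS Q) ∪ ({x | ∃ c, ∀ n, x ∈ Q n c} ∩ MS Q) := by
    apply Subset.antisymm
    · intro x hx
      by_cases hxM : x ∈ MS Q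
      · exact Or.inr ⟨hx, hxM⟩
      · exact Or.inl ⟨hsub1 hx, hxM⟩
    · rintro x (⟨hx1, hx2⟩ | ⟨hx, -⟩)
      · exact HS_branch Q hQd hx1 hx2
      · exact hx
  rw [hsplit]
  exact ((HS_bp Q hQm 0 cdef).diff (MS_meagre Q hQd hQm).baireMeasurableSet).union
    (((MS_meagre Q hQd hQm).mono inter_subset_right).baireMeasurableSet)
end Suslin

/-- Any family is congruent, modulo the range of `d`, to one vanishing below `N`. -/
lemma trunc_tower : ∀ (N : ℕ) (A : ℕ → Type u) (_ : ∀ i, AddCommGroup (A i))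
    (P : ∀ i, A (i + 1) →+ A i) (g : ∀ i, A i),
    ∃ c : ∀ i, A i, (∀ i, i + 1 ≤ N → g i = c i - P i (c (i + 1))) ∧
      (∀ i, N ≤ i → c i = 0) := by
  intro N
  induction N with
  | zero =>
    intro A _ P g
    exact ⟨fun i => 0, fun i hi => by omega, fun i _ => rfl⟩
  | succ N ih =>
    intro A instA P g
    obtain ⟨c', hc'1, hc'2⟩ := ih (fun i => A (i + 1)) (fun i => inferInstance)
      (fun i => P (i + 1)) (fun i => g (i + 1))
    refine ⟨fun i => Nat.rec (g 0 + P 0 (c' 0)) (fun i _ => c' i) i, ?_, ?_⟩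
    · intro i hi
      match i with
      | 0 => simp
      | (i + 1) => exact hc'1 i (by omega)
    · intro i hi
      match i with
      | (i + 1) => exact hc'2 i (by omega)


section App

variable (G : ℕ → ℕ → Type*) [∀ i j, AddCommGroup (G i j)]
    [∀ i j, Countable (G i j)]
    (p : ∀ i j, G (i + 1) j →+ G i j) (h : ∀ i j, G i j →+ G i (j + 1))

/-- the set of `g` whose image at level `j+k` is in the range of `d_{j+k}` -/
def BSet (j k : ℕ) : Set (∀ i, G i j) :=
  {g | ∃ c : ∀ i, G i (j + k), ∀ i, hIter G h i j k (g i) = c i - p i (j + k) (c (i + 1))}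

variable (hcomm : ∀ i j (g : G (i + 1) j), h i j (p i j g) = p i (j + 1) (h (i + 1) j g))

include hcomm in
lemma BSet_mono (j k : ℕ) : BSet G p h j k ⊆ BSet G p h j (k + 1) := by
  rintro g ⟨c, hc⟩
  refine ⟨fun i => h i (j + k) (c i), fun i => ?_⟩
  have : hIter G h i j (k + 1) (g i) = h i (j + k) (hIter G h i j k (g i)) := rfl
  rw [this, hc i, map_sub, hcomm i (j + k) (c (i + 1))]
  rfl

omit [∀ i j, Countable (G i j)] in
lemma BSet_sub (j k : ℕ) {g g' : ∀ i, G i j} (hg : g ∈ BSet G p h j k)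
    (hg' : g' ∈ BSet G p h j k) : g - g' ∈ BSet G p h j k := by
  obtain ⟨c, hc⟩ := hg
  obtain ⟨c', hc'⟩ := hg'
  refine ⟨c - c', fun i => ?_⟩
  simp only [Pi.sub_apply, map_sub, hc i, hc' i]
  abel

omit [∀ i j, Countable (G i j)] in
lemma BSet_add (j k : ℕ) {g g' : ∀ i, G i j} (hg : g ∈ BSet G p h j k)
    (hg' : g' ∈ BSet G p h j k) : g + g' ∈ BSet G p h j k := by
  obtain ⟨c, hc⟩ := hg
  obtain ⟨c', hc'⟩ := hg'
  refine ⟨c + c', fun i => ?_⟩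
  simp only [Pi.add_apply, map_add, hc i, hc' i]
  abel

omit [∀ i j, Countable (G i j)] in
include hcomm in
lemma hIter_p (j k : ℕ) : ∀ i (y : G (i + 1) j),
    hIter G h i j k (p i j y) = p i (j + k) (hIter G h (i + 1) j k y) := by
  induction k with
  | zero => intro i y; rfl
  | succ k ih =>
    intro i y
    have e1 : hIter G h i j (k + 1) (p i j y) = h i (j + k) (hIter G h i j k (p i j y)) := rfl
    have e2 : hIter G h (i + 1) j (k + 1) y = h (i + 1) (j + k) (hIter G h (i + 1) j k y) := rfl
    rw [e1, ih i y, hcomm i (j + k), e2]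
    rfl

omit [∀ i j, Countable (G i j)] in
include hcomm in
lemma BSet_univ (j k N : ℕ)
    (hN : ∀ u : ∀ i, G i j, (∀ i < N, u i = 0) → u ∈ BSet G p h j k) :
    ∀ g, g ∈ BSet G p h j k := by
  intro g
  obtain ⟨c, hc1, hc2⟩ := trunc_tower N (fun i => G i j) (fun i => inferInstance)
    (fun i => p i j) g
  -- u := g - d c vanishes below N
  have hu : (g - fun i => (c i - p i j (c (i + 1)))) ∈ BSet G p h j k := by
    refine hN _ (fun i hi => ?_)
    simp only [Pi.sub_apply]
    rw [← hc1 i (by omega)]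
    abel
  -- d c is in BSet
  have hdc : (fun i => (c i - p i j (c (i + 1)))) ∈ BSet G p h j k := by
    refine ⟨fun i => hIter G h i j k (c i), fun i => ?_⟩
    simp only [map_sub]
    rw [hIter_p G p h hcomm j k i (c (i + 1))]
  have : g = (g - fun i => (c i - p i j (c (i + 1)))) + (fun i => (c i - p i j (c (i + 1)))) := by
    ext i
    simp
  rw [this]
  exact BSet_add G p h j k hu hdc

include hcomm in
theorem exists_BSet_univ (j : ℕ)
    (hcover : ∀ g : ∀ i, G i j, ∃ k, g ∈ BSet G p h j k) :
    ∃ k, ∀ g, g ∈ BSet G p h j k := by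
  classical
  letI : ∀ i j', TopologicalSpace (G i j') := fun _ _ => ⊥
  haveI : ∀ i j', DiscreteTopology (G i j') := fun _ _ => ⟨rfl⟩
  haveI : ∀ i j', IsTopologicalAddGroup (G i j') := fun _ _ =>
    { continuous_add := continuous_of_discreteTopology
      continuous_neg := continuous_of_discreteTopology }
  haveI : BaireSpace (∀ i, G i j) := by
    letI := TopologicalSpace.upgradeIsCompletelyMetrizable (∀ i, G i j)
    infer_instance
  -- each BSet is Baire measurable
  have hBP : ∀ k, BaireMeasurableSet (BSet G p h j k) := by
    intro k
    have hrw : BSet G p h j k = {g : ∀ i, G i j | ∃ c : ∀ i, G i (j + k), ∀ n,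
        g ∈ {g' : ∀ i, G i j | ∀ i, i + 2 ≤ n →
          hIter G h i j k (g' i) = c i - p i (j + k) (c (i + 1))}} := by
      ext g
      constructor
      · rintro ⟨c, hc⟩
        exact ⟨c, fun n i _ => hc i⟩
      · rintro ⟨c, hc⟩
        exact ⟨c, fun i => hc (i + 2) i le_rfl⟩
    rw [hrw]
    refine baireMeasurableSet_suslin _ ?_ ?_
    · intro n c c' hcc
      ext g'
      simp only [mem_setOf_eq]
      constructor <;> intro hg i hi
      · rw [← hcc i (by omega), ← hcc (i+1) (by omega)]
        exact hg i hi
      · rw [hcc i (by omega), hcc (i+1) (by omega)]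
        exact hg i hi
    · intro n c
      refine IsOpen.baireMeasurableSet ?_
      have : {g' : ∀ i, G i j | ∀ i, i + 2 ≤ n →
          hIter G h i j k (g' i) = c i - p i (j + k) (c (i + 1))}
          = ⋂ i ∈ {i : ℕ | i + 2 ≤ n}, ((fun g' : ∀ i, G i j => g' i) ⁻¹'
            {y | hIter G h i j k y = c i - p i (j + k) (c (i + 1))}) := by
        ext g'
        simp only [mem_setOf_eq, mem_iInter, mem_preimage]
      rw [this]
      refine Set.Finite.isOpen_biInter ((finite_lt_nat n).subset (fun i hi => by
        simp only [mem_setOf_eq] at hi ⊢; omega)) ?_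
      intro i _
      exact (continuous_apply i).isOpen_preimage _ (isOpen_discrete _)
  -- some BSet is nonmeagre
  have hne : Nonempty (∀ i, G i j) := ⟨fun _ => 0⟩
  have hnm : ∃ k, ¬ IsMeagre (BSet G p h j k) := by
    by_contra hall
    push_neg at hall
    have huniv : IsMeagre (univ : Set (∀ i, G i j)) := by
      refine IsMeagre.mono ?_ (isMeagre_iUnion' hall)
      intro g _
      exact mem_iUnion.mpr (hcover g)
    have := dense_of_mem_residual huniv
    rw [compl_univ] at this
    exact (this.nonempty).elim (fun x hx => hx)
  obtain ⟨k, hk⟩ := hnm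
  -- it is comeagre in some cylinder
  obtain ⟨U, hUo, hUe⟩ := (hBP k).residualEq_isOpen
  have hE : {x | x ∈ BSet G p h j k ↔ x ∈ U} ∈ residual _ := by
    have := hUe
    rw [Filter.eventuallyEq_set] at this
    exact this
  have hBU : IsMeagre (BSet G p h j k \ U) := by
    refine Filter.mem_of_superset hE (fun x hx hxm => hxm.2 (hx.mp hxm.1))
  have hUB : IsMeagre (U \ BSet G p h j k) := by
    refine Filter.mem_of_superset hE (fun x hx hxm => hxm.2 (hx.mpr hxm.1))
  have hUne : U.Nonempty := by
    rcases U.eq_empty_or_nonempty with rfl | hne'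
    · exact absurd (hBU.mono (s := BSet G p h j k \ ∅) (t := BSet G p h j k) (fun x hx => ⟨hx, fun hh => hh⟩)) hk
    · exact hne'
  obtain ⟨x0, hx0U⟩ := hUne
  -- find a cylinder around x0 inside U
  have hU𝓝 : U ∈ 𝓝 x0 := hUo.mem_nhds hx0U
  rw [nhds_pi, Filter.mem_pi] at hU𝓝
  obtain ⟨I, hIfin, t, ht, htU⟩ := hU𝓝
  obtain ⟨N0, hN0⟩ := hIfin.bddAbove
  set N := N0 + 1 with hN
  set V : Set (∀ i, G i j) := {y | ∀ i < N, y i = x0 i} with hV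
  have hVU : V ⊆ U := by
    intro y hy
    refine htU (fun i hi => ?_)
    rw [hy i (by have := hN0 hi; omega)]
    exact mem_of_mem_nhds (ht i)
  have hVo : IsOpen V := by
    have : V = ⋂ i ∈ {i : ℕ | i < N}, ((fun y : ∀ i, G i j => y i) ⁻¹' {x0 i}) := by
      ext y
      simp only [hV, mem_setOf_eq, mem_iInter, mem_preimage, mem_singleton_iff]
    rw [this]
    exact Set.Finite.isOpen_biInter (finite_lt_nat N)
      (fun i _ => (continuous_apply i).isOpen_preimage _ (isOpen_discrete _))
  have hVnm : ¬ IsMeagre V := by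
    intro hm
    obtain ⟨z, hz1, hz2⟩ := (dense_of_mem_residual hm).inter_open_nonempty V hVo
      ⟨x0, fun i _ => rfl⟩
    exact hz2 hz1
  -- cylinder minus BSet is meagre
  have hVB : IsMeagre (V \ BSet G p h j k) :=
    hUB.mono (s := U \ BSet G p h j k) (t := V \ BSet G p h j k) (fun x hx => ⟨hVU hx.1, hx.2⟩)
  -- translation-invariance: every u vanishing below N is in BSet
  have hUN : ∀ u : ∀ i, G i j, (∀ i < N, u i = 0) → u ∈ BSet G p h j k := by
    intro u hu
    have htr : IsMeagre ((fun g : ∀ i, G i j => g - u) ⁻¹' (V \ BSet G p h j k)) := by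
      refine IsMeagre.preimage_of_isOpenMap (Homeomorph.subRight u).continuous
        (Homeomorph.subRight u).isOpenMap hVB
    have hsplitV : V ⊆ (V \ BSet G p h j k) ∪
        ((fun g : ∀ i, G i j => g - u) ⁻¹' (V \ BSet G p h j k)) ∪
        (V ∩ BSet G p h j k ∩ {g | g - u ∈ BSet G p h j k}) := by
      intro y hy
      by_cases h1 : y ∈ BSet G p h j k
      · by_cases h2 : y - u ∈ BSet G p h j k
        · exact Or.inr ⟨⟨hy, h1⟩, h2⟩
        · refine Or.inl (Or.inr ⟨?_, h2⟩)
          intro i hi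
          simp only [Pi.sub_apply, hu i hi, sub_zero]
          exact hy i hi
      · exact Or.inl (Or.inl ⟨hy, h1⟩)
    have hinter : (V ∩ BSet G p h j k ∩ {g | g - u ∈ BSet G p h j k}).Nonempty := by
      by_contra hemp
      rw [not_nonempty_iff_eq_empty] at hemp
      have hM2 : IsMeagre ((V \ BSet G p h j k) ∪
          ((fun g : ∀ i, G i j => g - u) ⁻¹' (V \ BSet G p h j k))) := by
        rw [IsMeagre, compl_union]
        exact Filter.inter_mem hVB htr
      refine hVnm (hM2.mono ?_)
      intro y hy
      rcases hsplitV hy with h' | h'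
      · exact h'
      · rw [hemp] at h'
        exact absurd h' (notMem_empty y)
    obtain ⟨y, ⟨-, hyB⟩, hyuB⟩ := hinter
    have := BSet_sub G p h j k hyB hyuB
    rwa [sub_sub_cancel] at this
  exact ⟨k, BSet_univ G p h hcomm j k N hUN⟩

end App

/-- Proposition (the surjective case of Theorem A(c)): for a direct sequence of towers
of countable abelian groups, set `Γ_j = lim¹_i G_{ij}`, the cokernel of
`d_j(g)_i = g_i − p_{ij}(g_{i+1})`; elements of `Γ_j` are classes of families
`g : ∀ i, G i j`.  Suppose each induced homomorphism `Γ_j → Γ_{j+1}` is surjective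
(every family at level `j+1` agrees with the image of a family at level `j` modulo the
range of `d_{j+1}`).  If the colimit of the `Γ_j` is trivial, then for each `j` there
is `k > j` such that the composite homomorphism `Γ_j → Γ_k` is the zero
homomorphism. -/
theorem stmt_11 (G : ℕ → ℕ → Type*) [∀ i j, AddCommGroup (G i j)]
    [∀ i j, Countable (G i j)]
    (p : ∀ i j, G (i + 1) j →+ G i j) (h : ∀ i j, G i j →+ G i (j + 1))
    (hcomm : ∀ i j (g : G (i + 1) j), h i j (p i j g) = p i (j + 1) (h (i + 1) j g))
    (hsurj : ∀ j (g : ∀ i, G i (j + 1)), ∃ g' : ∀ i, G i j, ∃ c : ∀ i, G i (j + 1),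
      ∀ i, h i j (g' i) - g i = c i - p i (j + 1) (c (i + 1)))
    (htriv : ∀ j (g : ∀ i, G i j), ∃ k, ∃ c : ∀ i, G i (j + k),
      ∀ i, hIter G h i j k (g i) = c i - p i (j + k) (c (i + 1))) :
    ∀ j, ∃ k, 0 < k ∧ ∀ g : ∀ i, G i j, ∃ c : ∀ i, G i (j + k),
      ∀ i, hIter G h i j k (g i) = c i - p i (j + k) (c (i + 1)) := by
  intro j
  obtain ⟨k, hk⟩ := exists_BSet_univ G p h hcomm j
    (fun g => (htriv j g).imp (fun k hk => hk))
  exact ⟨k + 1, Nat.succ_pos k, fun g => BSet_mono G p h hcomm j k (hk g)⟩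
end
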